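/- arXiv:2306.12183 — 4 statements merged into one kernel-verified Lean document; each statement's English description precedes it below -/
import Mathlib

section
/- Assume that every 2×2 complex matrix satisfies the Crouzeix inequality. Then every rank-one n×n complex matrix satisfies the Crouzeix inequality. -/
open scoped ComplexInnerProductSpace

/-- The continuous linear map on Euclidean space induced by a square matrix. -/
noncomputable def matCLM {ι : Type} [Fintype ι] [DecidableEq ι] (A : Matrix ι ι ℂ) :
    EuclideanSpace ℂ ι →L[ℂ] EuclideanSpace ℂ ι :=
  Matrix.toEuclideanCLM (𝕜 := ℂ) A

/-- The numerical range of a square complex matrix. -/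
def numRange {ι : Type} [Fintype ι] [DecidableEq ι] (A : Matrix ι ι ℂ) : Set ℂ :=
  {z | ∃ x : EuclideanSpace ℂ ι, ‖x‖ = 1 ∧ z = ⟪x, matCLM A x⟫}

/-- A square complex matrix satisfies the Crouzeix inequality if for every polynomial `p`,
`‖p(A)‖ ≤ 2 * sup_{z ∈ W(A)} |p(z)|`. -/
def CrouzeixIneq {ι : Type} [Fintype ι] [DecidableEq ι] (A : Matrix ι ι ℂ) : Prop :=
  ∀ p : Polynomial ℂ,
    ‖matCLM (Polynomial.aeval A p)‖ ≤ 2 * ⨆ z ∈ numRange A, ‖Polynomial.eval z p‖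

open Polynomial in
lemma aeval_of_sq {R : Type*} [Ring R] [Algebra ℂ R] (M : R) (t : ℂ)
    (h : M * M = t • M) (p : ℂ[X]) :
    aeval M p = algebraMap ℂ R (p.coeff 0) + (p.divX.eval t) • M := by
  have hpow : ∀ k : ℕ, M ^ (k + 1) = t ^ k • M := by
    intro k; induction k with
    | zero => simp
    | succ k ih => rw [pow_succ, ih, smul_mul_assoc, h, smul_smul, ← pow_succ]
  have hmul : ∀ q : ℂ[X], (aeval M q) * M = (q.eval t) • M := by
    intro q
    induction q using Polynomial.induction_on' with
    | add f g hf hg => rw [map_add, add_mul, hf, hg, eval_add, add_smul]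
    | monomial k a =>
      rw [aeval_monomial, eval_monomial, mul_assoc, ← pow_succ, hpow,
        Algebra.smul_def, ← mul_assoc, ← map_mul, ← Algebra.smul_def]
  conv_lhs => rw [← p.divX_mul_X_add]
  rw [map_add, map_mul, aeval_X, aeval_C, hmul p.divX, add_comm]

lemma abs_le_opNorm_of_mem_numRange {ι : Type} [Fintype ι] [DecidableEq ι]
    (A : Matrix ι ι ℂ) {z : ℂ} (hz : z ∈ numRange A) : ‖z‖ ≤ ‖matCLM A‖ := by
  obtain ⟨x, hx, rfl⟩ := hz
  calc ‖⟪x, matCLM A x⟫‖ = ‖⟪x, matCLM A x⟫‖ := rfl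
    _ ≤ ‖x‖ * ‖matCLM A x‖ := norm_inner_le_norm _ _
    _ ≤ ‖x‖ * (‖matCLM A‖ * ‖x‖) := by
        gcongr; exact (matCLM A).le_opNorm x
    _ = ‖matCLM A‖ := by rw [hx]; ring

lemma nr_bdd {ι : Type} [Fintype ι] [DecidableEq ι] (A : Matrix ι ι ℂ) (p : Polynomial ℂ) :
    BddAbove (Set.range fun z => ⨆ _ : z ∈ numRange A, ‖Polynomial.eval z p‖) := by
  obtain ⟨C, hC⟩ := (isCompact_closedBall (0:ℂ) ‖matCLM A‖).exists_bound_of_continuousOn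
    (fun z _ => (p.continuous_aeval.norm.continuousAt (x := z)).continuousWithinAt)
  refine ⟨max C 0, ?_⟩
  rintro r ⟨z, rfl⟩
  by_cases hz : z ∈ numRange A
  · haveI : Nonempty (z ∈ numRange A) := ⟨hz⟩
    simp only [ciSup_const]
    have hzb : z ∈ Metric.closedBall (0:ℂ) ‖matCLM A‖ := by
      rw [Metric.mem_closedBall, Complex.dist_eq, sub_zero]
      exact abs_le_opNorm_of_mem_numRange A hz
    have := hC z hzb
    simp only [Polynomial.aeval_def] at this
    refine le_max_of_le_left ?_
    simpa only [norm_norm, Algebra.algebraMap_self, Polynomial.eval₂_id] using this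
  · haveI : IsEmpty (z ∈ numRange A) := ⟨hz⟩
    simp only [Real.iSup_of_isEmpty]
    exact le_max_right _ _

lemma nr_sup_nonneg {ι : Type} [Fintype ι] [DecidableEq ι] (A : Matrix ι ι ℂ) (p : Polynomial ℂ) :
    0 ≤ ⨆ z ∈ numRange A, ‖Polynomial.eval z p‖ :=
  Real.iSup_nonneg fun _ => Real.iSup_nonneg fun _ => norm_nonneg _

lemma le_nr_sup {ι : Type} [Fintype ι] [DecidableEq ι] (A : Matrix ι ι ℂ) (p : Polynomial ℂ)
    {z : ℂ} (hz : z ∈ numRange A) :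
    ‖Polynomial.eval z p‖ ≤ ⨆ z ∈ numRange A, ‖Polynomial.eval z p‖ := by
  have h := le_ciSup (nr_bdd A p) z
  refine le_trans ?_ h
  haveI : Nonempty (z ∈ numRange A) := ⟨hz⟩
  rw [ciSup_const]

lemma nr_sup_mono {ι κ : Type} [Fintype ι] [DecidableEq ι] [Fintype κ] [DecidableEq κ]
    (A : Matrix ι ι ℂ) (B : Matrix κ κ ℂ) (h : numRange B ⊆ numRange A) (p : Polynomial ℂ) :
    (⨆ z ∈ numRange B, ‖Polynomial.eval z p‖) ≤
      ⨆ z ∈ numRange A, ‖Polynomial.eval z p‖ :=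
  Real.iSup_le (fun z => Real.iSup_le (fun hz => le_nr_sup A p (h hz)) (nr_sup_nonneg A p))
    (nr_sup_nonneg A p)

lemma matCLM_apply {ι : Type} [Fintype ι] [DecidableEq ι] (A : Matrix ι ι ℂ) (v : ι → ℂ) :
    matCLM A ((WithLp.equiv 2 (ι → ℂ)).symm v) = (WithLp.equiv 2 (ι → ℂ)).symm (A.mulVec v) := by
  rfl

lemma matCLM_aeval {ι : Type} [Fintype ι] [DecidableEq ι] (A : Matrix ι ι ℂ) (p : Polynomial ℂ) :
    matCLM (Polynomial.aeval A p) = Polynomial.aeval (matCLM A) p :=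
  (Polynomial.aeval_algHom_apply (Matrix.toEuclideanCLM (𝕜 := ℂ)) A p).symm

lemma matCLM_algebraMap {ι : Type} [Fintype ι] [DecidableEq ι] (c : ℂ) :
    matCLM (algebraMap ℂ (Matrix ι ι ℂ) c) =
      algebraMap ℂ (EuclideanSpace ℂ ι →L[ℂ] EuclideanSpace ℂ ι) c :=
  AlgHomClass.commutes (Matrix.toEuclideanCLM (𝕜 := ℂ) (n := ι)) c

lemma coord_le_norm {ι : Type} [Fintype ι] (x : EuclideanSpace ℂ ι) (i : ι) :
    ‖x i‖ ≤ ‖x‖ := by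
  rw [EuclideanSpace.norm_eq]
  rw [show ‖x i‖ = ‖x i‖ from rfl, ← Real.sqrt_sq (norm_nonneg (x i))]
  apply Real.sqrt_le_sqrt
  exact Finset.single_le_sum (f := fun j => ‖x j‖ ^ 2) (fun j _ => sq_nonneg _)
    (Finset.mem_univ i)

lemma crouzeix_dim_one (A : Matrix (Fin 1) (Fin 1) ℂ) : CrouzeixIneq A := by
  intro p
  have ha : A = algebraMap ℂ _ (A 0 0) := by
    ext i j
    fin_cases i; fin_cases j
    simp [Matrix.algebraMap_matrix_apply]
  have hnorm : ‖algebraMap ℂ (EuclideanSpace ℂ (Fin 1) →L[ℂ] EuclideanSpace ℂ (Fin 1))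
      (Polynomial.eval (A 0 0) p)‖ = ‖Polynomial.eval (A 0 0) p‖ := by
    rw [Algebra.algebraMap_eq_smul_one, norm_smul, norm_one, mul_one]
  have hn : ‖matCLM (Polynomial.aeval A p)‖ = ‖Polynomial.eval (A 0 0) p‖ := by
    conv_lhs => rw [ha, Polynomial.aeval_algebraMap_apply_eq_algebraMap_eval, matCLM_algebraMap]
    exact hnorm
  rw [hn]
  have hmem : A 0 0 ∈ numRange A := by
    refine ⟨(WithLp.equiv 2 (Fin 1 → ℂ)).symm ![1], ?_, ?_⟩
    · rw [EuclideanSpace.norm_eq]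
      simp
    · rw [matCLM_apply, PiLp.inner_apply]
      simp [Matrix.mulVec, dotProduct, Matrix.vecHead]
  have h1 := le_nr_sup A p hmem
  have h0 := nr_sup_nonneg A p
  linarith

lemma matCLM_apply' {ι : Type} [Fintype ι] [DecidableEq ι] (A : Matrix ι ι ℂ)
    (x : EuclideanSpace ℂ ι) :
    matCLM A x = (WithLp.equiv 2 (ι → ℂ)).symm (A.mulVec ((WithLp.equiv 2 (ι → ℂ)) x)) := rfl

lemma rank_one_decomp {n : ℕ} (A : Matrix (Fin n) (Fin n) ℂ) (hA : A.rank = 1) :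
    ∃ u w : EuclideanSpace ℂ (Fin n), ‖u‖ = 1 ∧ ∀ x, matCLM A x = ⟪w, x⟫ • u := by
  rw [Matrix.rank] at hA
  obtain ⟨v, hv0, hv⟩ := finrank_eq_one_iff'.mp hA
  set u₀ : EuclideanSpace ℂ (Fin n) := (WithLp.equiv 2 (Fin n → ℂ)).symm v.1 with hu₀def
  have hu₀ : u₀ ≠ 0 := by
    simp only [hu₀def, ne_eq]
    intro h
    apply hv0
    apply Subtype.ext
    simpa using congrArg (WithLp.equiv 2 (Fin n → ℂ)) h
  have hr : ∀ x : EuclideanSpace ℂ (Fin n), ∃ c : ℂ, matCLM A x = c • u₀ := by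
    intro x
    obtain ⟨c, hc⟩ := hv ⟨A.mulVecLin ((WithLp.equiv 2 (Fin n → ℂ)) x),
      LinearMap.mem_range_self _ _⟩
    refine ⟨c, ?_⟩
    have hc' : c • v.1 = A.mulVec ((WithLp.equiv 2 (Fin n → ℂ)) x) := congrArg Subtype.val hc
    rw [matCLM_apply', ← hc']
    rfl
  set u : EuclideanSpace ℂ (Fin n) := (‖u₀‖⁻¹ : ℂ) • u₀ with hudef
  have hu : ‖u‖ = 1 := by
    rw [hudef, norm_smul]
    simp [norm_inv, inv_mul_cancel₀ (norm_ne_zero_iff.mpr hu₀)]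
  have huu : ⟪u, u⟫ = 1 := by
    rw [inner_self_eq_norm_sq_to_K, hu]; norm_num
  have hr' : ∀ x, matCLM A x = ⟪u, matCLM A x⟫ • u := by
    intro x
    obtain ⟨c, hc⟩ := hr x
    have h2 : matCLM A x = (c * ‖u₀‖) • u := by
      rw [hc, hudef, smul_smul, mul_assoc, mul_inv_cancel₀ (by
        exact_mod_cast (norm_ne_zero_iff.mpr hu₀ : (‖u₀‖ : ℝ) ≠ 0)), mul_one]
    rw [h2, inner_smul_right, huu, mul_one]
  refine ⟨u, (ContinuousLinearMap.adjoint (matCLM A)) u, hu, fun x => ?_⟩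
  rw [ContinuousLinearMap.adjoint_inner_left]
  exact hr' x

lemma exists_unit_orthogonal {n : ℕ} (hn : 2 ≤ n) (u : EuclideanSpace ℂ (Fin n)) :
    ∃ v, ‖v‖ = 1 ∧ ⟪u, v⟫ = 0 := by
  have hne : (ℂ ∙ u)ᗮ ≠ ⊥ := by
    intro hbot
    have h1 := Submodule.finrank_add_finrank_orthogonal (K := (ℂ ∙ u))
    rw [hbot, finrank_bot] at h1
    have h2 : Module.finrank ℂ ↥(ℂ ∙ u) ≤ 1 := by
      rcases eq_or_ne u 0 with h | h
      · subst h
        rw [Submodule.span_zero_singleton, finrank_bot]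
        omega
      · rw [finrank_span_singleton h]
    have h3 : Module.finrank ℂ (EuclideanSpace ℂ (Fin n)) = n := finrank_euclideanSpace_fin
    omega
  obtain ⟨v0, hv0mem, hv0⟩ := Submodule.exists_mem_ne_zero_of_ne_bot hne
  have hiv : ⟪u, v0⟫ = 0 := Submodule.mem_orthogonal_singleton_iff_inner_right.mp hv0mem
  refine ⟨(‖v0‖⁻¹ : ℂ) • v0, ?_, ?_⟩
  · rw [norm_smul]
    simp [norm_inv, inv_mul_cancel₀ (norm_ne_zero_iff.mpr hv0)]
  · rw [inner_smul_right, hiv, mul_zero]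


set_option maxHeartbeats 4000000 in
/-- If every `2 × 2` complex matrix satisfies the Crouzeix inequality, then every rank-one
`n × n` complex matrix satisfies the Crouzeix inequality. -/
theorem crouzeix_rank_one (h2 : ∀ B : Matrix (Fin 2) (Fin 2) ℂ, CrouzeixIneq B)
    {n : ℕ} (A : Matrix (Fin n) (Fin n) ℂ) (hA : A.rank = 1) :
    CrouzeixIneq A := by
  rcases Nat.lt_or_ge n 2 with hn | hn
  · interval_cases n
    · exfalso
      have h := A.rank_le_card_width
      simp at h
      omega
    · exact crouzeix_dim_one A
  · intro p
    obtain ⟨u, w, hu, hw⟩ := rank_one_decomp A hA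
    have huu : ⟪u, u⟫ = (1:ℂ) := by rw [inner_self_eq_norm_sq_to_K, hu]; norm_num
    set t : ℂ := ⟪w, u⟫ with ht
    set w' : EuclideanSpace ℂ (Fin n) := w - (starRingEnd ℂ t) • u with hw'def
    have huw' : ⟪u, w'⟫ = (0:ℂ) := by
      have hconj : ⟪u, w⟫ = starRingEnd ℂ t := by rw [ht, inner_conj_symm]
      rw [hw'def, inner_sub_right, inner_smul_right, huu, mul_one, hconj, sub_self]
    set γ : ℝ := ‖w'‖ with hγ
    obtain ⟨u', hu'1, huu', hwdec⟩ :
        ∃ u', ‖u'‖ = 1 ∧ ⟪u, u'⟫ = (0:ℂ) ∧ w = (starRingEnd ℂ t) • u + (γ:ℂ) • u' := by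
      by_cases h0 : w' = 0
      · obtain ⟨v, hv1, hv2⟩ := exists_unit_orthogonal hn u
        refine ⟨v, hv1, hv2, ?_⟩
        have hγ0 : γ = 0 := by rw [hγ, h0, norm_zero]
        have hw0 : w = (starRingEnd ℂ t) • u := by
          have := sub_eq_zero.mp (hw'def ▸ h0)
          exact this
        rw [hγ0, hw0]
        simp
      · have hγ0 : γ ≠ 0 := by rw [hγ]; exact norm_ne_zero_iff.mpr h0
        refine ⟨(↑(γ⁻¹) : ℂ) • w', ?_, ?_, ?_⟩
        · rw [norm_smul]
          simp only [Complex.norm_real, Real.norm_eq_abs, ← hγ]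
          rw [abs_of_nonneg (by positivity)]
          field_simp
        · rw [inner_smul_right, huw', mul_zero]
        · rw [smul_smul]
          have : ((γ:ℂ)) * ((γ⁻¹ : ℝ):ℂ) = 1 := by
            norm_cast
            field_simp
          rw [this, one_smul, hw'def]
          abel
    have hu'u : ⟪u', u⟫ = (0:ℂ) := by rw [← inner_conj_symm, huu', map_zero]
    have hu'u' : ⟪u', u'⟫ = (1:ℂ) := by rw [inner_self_eq_norm_sq_to_K, hu'1]; norm_num
    have hwu' : ⟪w, u'⟫ = ((γ:ℝ):ℂ) := by
      rw [hwdec, inner_add_left, inner_smul_left, inner_smul_left, Complex.conj_conj,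
        Complex.conj_ofReal, huu', hu'u', mul_zero, mul_one, zero_add]
    set B : Matrix (Fin 2) (Fin 2) ℂ := !![t, (γ:ℂ); 0, 0] with hB
    have hSap : ∀ v : Fin 2 → ℂ, matCLM B ((WithLp.equiv 2 (Fin 2 → ℂ)).symm v)
        = (WithLp.equiv 2 (Fin 2 → ℂ)).symm ![t * v 0 + (γ:ℂ) * v 1, 0] := by
      intro v
      rw [matCLM_apply]
      congr 1
      funext i
      fin_cases i <;>
        simp [hB, Matrix.mulVec, dotProduct, Fin.sum_univ_two]
    have hTT : matCLM A * matCLM A = t • matCLM A := by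
      refine ContinuousLinearMap.ext fun x => ?_
      simp only [ContinuousLinearMap.mul_apply, ContinuousLinearMap.smul_apply]
      rw [hw x, map_smul, hw u, ← ht, smul_smul, smul_smul, mul_comm]
    have hBB : B * B = t • B := by
      ext i j
      fin_cases i <;> fin_cases j <;>
        simp [hB, Matrix.mul_apply, Fin.sum_univ_two]
    have hSS : matCLM B * matCLM B = t • matCLM B := by
      have hcongr := congrArg matCLM hBB
      simpa only [matCLM, map_mul, map_smul] using hcongr
    have hd : matCLM (Polynomial.aeval A p) =
        algebraMap ℂ _ (p.coeff 0) + (Polynomial.eval t p.divX) • matCLM A := by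
      rw [matCLM_aeval, aeval_of_sq _ t hTT]
    have hdB : matCLM (Polynomial.aeval B p) =
        algebraMap ℂ _ (p.coeff 0) + (Polynomial.eval t p.divX) • matCLM B := by
      rw [matCLM_aeval, aeval_of_sq _ t hSS]
    set d : ℂ := p.coeff 0 with hdd
    set c : ℂ := Polynomial.eval t p.divX with hcc
    set N : ℝ := ‖matCLM (Polynomial.aeval B p)‖ with hN
    have happ : ∀ x : EuclideanSpace ℂ (Fin n), matCLM (Polynomial.aeval A p) x
        = d • x + (c * ⟪w, x⟫) • u := by
      intro x
      rw [hd]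
      simp only [ContinuousLinearMap.add_apply, ContinuousLinearMap.smul_apply,
        Algebra.algebraMap_eq_smul_one, ContinuousLinearMap.one_apply]
      rw [hw x, smul_smul]
    have happB : ∀ v : Fin 2 → ℂ,
        matCLM (Polynomial.aeval B p) ((WithLp.equiv 2 (Fin 2 → ℂ)).symm v)
        = (WithLp.equiv 2 (Fin 2 → ℂ)).symm
            ![d * v 0 + c * (t * v 0 + (γ:ℂ) * v 1), d * v 1] := by
      intro v
      rw [hdB]
      simp only [ContinuousLinearMap.add_apply, ContinuousLinearMap.smul_apply,
        Algebra.algebraMap_eq_smul_one, ContinuousLinearMap.one_apply]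
      rw [hSap v]
      ext i
      fin_cases i <;>
        simp [WithLp.equiv_symm_apply, PiLp.add_apply, PiLp.smul_apply, smul_eq_mul] <;>
        ring
    have hnormE2 : ∀ v : Fin 2 → ℂ, ‖(WithLp.equiv 2 (Fin 2 → ℂ)).symm v‖^2
        = ‖v 0‖^2 + ‖v 1‖^2 := by
      intro v
      rw [EuclideanSpace.norm_eq, Real.sq_sqrt (by positivity)]
      simp [Fin.sum_univ_two]
    have hdN : ‖d‖ ≤ N := by
      have h1 := (matCLM (Polynomial.aeval B p)).le_opNorm
        ((WithLp.equiv 2 (Fin 2 → ℂ)).symm ![0, 1])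
      rw [happB] at h1
      have hnx : ‖(WithLp.equiv 2 (Fin 2 → ℂ)).symm ![(0:ℂ), 1]‖ = 1 := by
        rw [EuclideanSpace.norm_eq]
        simp [Fin.sum_univ_two]
      rw [hnx, mul_one] at h1
      refine le_trans ?_ h1
      have hcl := coord_le_norm
        ((WithLp.equiv 2 (Fin 2 → ℂ)).symm ![d * 0 + c * (t * 0 + (γ:ℂ) * 1), d * 1]) 1
      simpa using hcl
    have key : ‖matCLM (Polynomial.aeval A p)‖ ≤ N := by
      refine ContinuousLinearMap.opNorm_le_bound _ (by rw [hN]; positivity) fun x => ?_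
      set a : ℂ := ⟪u, x⟫ with ha
      set b : ℂ := ⟪u', x⟫ with hb
      set z : EuclideanSpace ℂ (Fin n) := x - a • u - b • u' with hz
      have hx_dec : x = a • u + b • u' + z := by rw [hz]; abel
      have huz : ⟪u, z⟫ = (0:ℂ) := by
        rw [hz, inner_sub_right, inner_sub_right, inner_smul_right, inner_smul_right,
          huu, huu', mul_one, mul_zero, ← ha]
        ring
      have hu'z : ⟪u', z⟫ = (0:ℂ) := by
        rw [hz, inner_sub_right, inner_sub_right, inner_smul_right, inner_smul_right,
          hu'u, hu'u', mul_one, mul_zero, ← hb]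
        ring
      have hwx : ⟪w, x⟫ = t * a + (γ:ℂ) * b := by
        rw [hwdec, inner_add_left, inner_smul_left, inner_smul_left, Complex.conj_conj,
          Complex.conj_ofReal, ← ha, ← hb]
      set α : ℂ := d * a + c * (t * a + (γ:ℂ) * b) with hα
      set β : ℂ := d * b with hβ
      have hVap : matCLM (Polynomial.aeval A p) x = α • u + β • u' + d • z := by
        rw [happ x, hwx]
        conv_lhs => rw [hx_dec]
        rw [hα, hβ]
        module
      have hnorm3 : ∀ α' β' d' : ℂ, ‖α' • u + β' • u' + d' • z‖^2
          = ‖α'‖^2 + ‖β'‖^2 + ‖d'‖^2 * ‖z‖^2 := by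
        intro α' β' d'
        have e1 : ⟪α' • u + β' • u', d' • z⟫ = (0:ℂ) := by
          rw [inner_add_left, inner_smul_left, inner_smul_left, inner_smul_right,
            inner_smul_right, huz, hu'z]
          ring
        have e2 : ⟪α' • u, β' • u'⟫ = (0:ℂ) := by
          rw [inner_smul_left, inner_smul_right, huu']
          ring
        have g1 := norm_add_sq_eq_norm_sq_add_norm_sq_of_inner_eq_zero _ _ e1
        have g2 := norm_add_sq_eq_norm_sq_add_norm_sq_of_inner_eq_zero _ _ e2
        rw [sq, g1, g2]
        simp only [norm_smul, hu, hu'1, mul_one]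
        ring
      have hxnorm : ‖x‖^2 = ‖a‖^2 + ‖b‖^2 + ‖z‖^2 := by
        conv_lhs => rw [hx_dec]
        have h3 := hnorm3 a b 1
        simpa using h3
      have hy := (matCLM (Polynomial.aeval B p)).le_opNorm
        ((WithLp.equiv 2 (Fin 2 → ℂ)).symm ![a, b])
      rw [happB] at hy
      have hyl : ‖(WithLp.equiv 2 (Fin 2 → ℂ)).symm
          ![d * (![a,b]) 0 + c * (t * (![a,b]) 0 + (γ:ℂ) * (![a,b]) 1), d * (![a,b]) 1]‖^2
          = ‖α‖^2 + ‖β‖^2 := by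
        rw [hnormE2]
        simp [hα, hβ]
      have hyr : ‖(WithLp.equiv 2 (Fin 2 → ℂ)).symm ![a, b]‖^2
          = ‖a‖^2 + ‖b‖^2 := by
        rw [hnormE2]
        simp
      have hVn : ‖matCLM (Polynomial.aeval A p) x‖^2
          = ‖α‖^2 + ‖β‖^2 + ‖d‖^2 * ‖z‖^2 := by
        rw [hVap, hnorm3]
      have h1 : ‖α‖^2 + ‖β‖^2
          ≤ N^2 * (‖a‖^2 + ‖b‖^2) := by
        rw [← hyl, ← hyr]
        have hnn : (0:ℝ) ≤ ‖(WithLp.equiv 2 (Fin 2 → ℂ)).symm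
            ![d * (![a,b]) 0 + c * (t * (![a,b]) 0 + (γ:ℂ) * (![a,b]) 1), d * (![a,b]) 1]‖ :=
          norm_nonneg _
        have hnn2 : (0:ℝ) ≤ N * ‖(WithLp.equiv 2 (Fin 2 → ℂ)).symm ![a, b]‖ :=
          mul_nonneg (by rw [hN]; positivity) (norm_nonneg _)
        nlinarith [hy]
      have hsq : ‖matCLM (Polynomial.aeval A p) x‖^2 ≤ (N * ‖x‖)^2 := by
        rw [hVn]
        have hNd : ‖d‖^2 ≤ N^2 := by nlinarith [hdN, norm_nonneg d]
        have hzn : (0:ℝ) ≤ ‖z‖^2 := sq_nonneg _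
        calc ‖α‖^2 + ‖β‖^2 + ‖d‖^2 * ‖z‖^2
            ≤ N^2 * (‖a‖^2 + ‖b‖^2) + N^2 * ‖z‖^2 := by nlinarith
          _ = N^2 * (‖a‖^2 + ‖b‖^2 + ‖z‖^2) := by ring
          _ = (N * ‖x‖)^2 := by rw [mul_pow, hxnorm]
      exact le_of_pow_le_pow_left₀ two_ne_zero
        (mul_nonneg (by rw [hN]; positivity) (norm_nonneg _)) hsq
    have hsub : numRange B ⊆ numRange A := by
      rintro ζ ⟨x, hx, rfl⟩
      set y : EuclideanSpace ℂ (Fin n) := (x 0) • u + (x 1) • u' with hy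
      have hyn : ‖y‖ = 1 := by
        have hy2 : ‖y‖^2 = 1 := by
          have e2 : ⟪(x 0) • u, (x 1) • u'⟫ = (0:ℂ) := by
            rw [inner_smul_left, inner_smul_right, huu']
            ring
          have g2 := norm_add_sq_eq_norm_sq_add_norm_sq_of_inner_eq_zero _ _ e2
          have hx2 : ‖x‖^2 = 1 := by rw [hx]; norm_num
          rw [EuclideanSpace.norm_eq, Real.sq_sqrt (by positivity)] at hx2
          simp only [Fin.sum_univ_two] at hx2
          rw [hy, sq, g2]
          simp only [norm_smul, hu, hu'1, mul_one]
          nlinarith [hx2, sq_nonneg (‖x 0‖), sq_nonneg (‖x 1‖)]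
        rw [← Real.sqrt_sq (norm_nonneg y), hy2, Real.sqrt_one]
      refine ⟨y, hyn, ?_⟩
      have hSx : ⟪x, matCLM B x⟫ = (starRingEnd ℂ (x 0)) * (t * x 0 + (γ:ℂ) * x 1) := by
        have hxv : x = (WithLp.equiv 2 (Fin 2 → ℂ)).symm (fun i => x i) := rfl
        rw [hxv, hSap, PiLp.inner_apply]
        simp [Fin.sum_univ_two, mul_comm]
      have hTy : ⟪y, matCLM A y⟫ = (t * x 0 + (γ:ℂ) * x 1) * (starRingEnd ℂ (x 0)) := by
        rw [hw y, inner_smul_right]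
        have hwy : ⟪w, y⟫ = t * x 0 + (γ:ℂ) * x 1 := by
          rw [hy, inner_add_right, inner_smul_right, inner_smul_right, ← ht, hwu']
          ring
        have hyu : ⟪y, u⟫ = starRingEnd ℂ (x 0) := by
          rw [hy, inner_add_left, inner_smul_left, inner_smul_left, huu, hu'u,
            mul_one, mul_zero, add_zero]
        rw [hwy, hyu]
      rw [hSx, hTy]
      ring
    calc ‖matCLM (Polynomial.aeval A p)‖ ≤ N := key
      _ ≤ 2 * ⨆ z ∈ numRange B, ‖Polynomial.eval z p‖ := h2 B p
      _ ≤ 2 * ⨆ z ∈ numRange A, ‖Polynomial.eval z p‖ := by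
          have := nr_sup_mono A B hsub p
          linarith
end

section
/- Let A be an n×n complex matrix satisfying the Crouzeix inequality, and let N be an m×m normal complex matrix (N* N = N N*). Then both Kronecker products N ⊗ A and A ⊗ N satisfy the Crouzeix inequality. -/
open scoped ComplexInnerProductSpace

namespace CrouzeixAux

open Polynomial Matrix

variable {ι κ : Type} [Fintype ι] [DecidableEq ι] [Fintype κ] [DecidableEq κ]

lemma matCLM_mul (M P : Matrix ι ι ℂ) : matCLM (M * P) = matCLM M * matCLM P :=
  map_mul (Matrix.toEuclideanCLM (𝕜 := ℂ)) M P

lemma matCLM_one : matCLM (1 : Matrix ι ι ℂ) = 1 :=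
  map_one (Matrix.toEuclideanCLM (𝕜 := ℂ))

lemma matCLM_star (M : Matrix ι ι ℂ) : matCLM (star M) = star (matCLM M) :=
  map_star (Matrix.toEuclideanCLM (𝕜 := ℂ)) M

lemma matCLM_smul (c : ℂ) (M : Matrix ι ι ℂ) : matCLM (c • M) = c • matCLM M :=
  map_smul (Matrix.toEuclideanCLM (𝕜 := ℂ)) c M

lemma matCLM_add (M P : Matrix ι ι ℂ) : matCLM (M + P) = matCLM M + matCLM P :=
  map_add (Matrix.toEuclideanCLM (𝕜 := ℂ)) M P

lemma matCLM_apply (M : Matrix ι ι ℂ) (x : EuclideanSpace ℂ ι) (i : ι) :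
    matCLM M x i = ∑ j, M i j * x j := by
  have h := congrFun (Matrix.ofLp_toEuclideanCLM (𝕜 := ℂ) (n := ι) M x) i
  simpa [Matrix.toLin'_apply, Matrix.mulVec, dotProduct, matCLM] using h

lemma matCLM_aeval (p : ℂ[X]) (M : Matrix ι ι ℂ) :
    matCLM (aeval M p) = aeval (matCLM M) p := by
  induction p using Polynomial.induction_on' with
  | add f g hf hg => rw [map_add, matCLM_add, hf, hg, map_add]
  | monomial k c =>
      simp only [aeval_monomial]
      rw [Algebra.algebraMap_eq_smul_one, Algebra.algebraMap_eq_smul_one, smul_mul_assoc,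
        smul_mul_assoc, one_mul, one_mul, matCLM_smul]
      congr 1
      exact map_pow (Matrix.toEuclideanCLM (𝕜 := ℂ)) M k

end CrouzeixAux

namespace CrouzeixAux

open Polynomial Matrix

variable {ι κ : Type} [Fintype ι] [DecidableEq ι] [Fintype κ] [DecidableEq κ]

variable {E F : Type*} [NormedAddCommGroup E] [InnerProductSpace ℂ E]
  [NormedAddCommGroup F] [InnerProductSpace ℂ F]

/-- Conjugation by a linear isometry equivalence, as an algebra homomorphism on
continuous linear maps. -/
noncomputable def conjAlgHom (f : E ≃ₗᵢ[ℂ] F) : (E →L[ℂ] E) →ₐ[ℂ] (F →L[ℂ] F) where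
  toFun T := (f.toContinuousLinearEquiv.toContinuousLinearMap.comp T).comp
      f.symm.toContinuousLinearEquiv.toContinuousLinearMap
  map_one' := by ext x; simp
  map_mul' S T := by ext x; simp
  map_zero' := by ext x; simp
  map_add' S T := by ext x; simp
  commutes' c := by
    ext x
    simp [Algebra.algebraMap_eq_smul_one]

lemma conjAlgHom_apply (f : E ≃ₗᵢ[ℂ] F) (T : E →L[ℂ] E) (x : F) :
    conjAlgHom f T x = f (T (f.symm x)) := rfl

lemma norm_conjAlgHom (f : E ≃ₗᵢ[ℂ] F) (T : E →L[ℂ] E) : ‖conjAlgHom f T‖ = ‖T‖ := by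
  refine le_antisymm ?_ ?_
  · refine ContinuousLinearMap.opNorm_le_bound _ (norm_nonneg T) fun x => ?_
    rw [conjAlgHom_apply, f.norm_map]
    calc ‖T (f.symm x)‖ ≤ ‖T‖ * ‖f.symm x‖ := T.le_opNorm _
    _ = ‖T‖ * ‖x‖ := by rw [f.symm.norm_map]
  · refine ContinuousLinearMap.opNorm_le_bound _ (norm_nonneg _) fun x => ?_
    have h1 : T x = f.symm (conjAlgHom f T (f x)) := by
      rw [conjAlgHom_apply, f.symm_apply_apply, f.symm_apply_apply]
    rw [h1, f.symm.norm_map]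
    calc ‖conjAlgHom f T (f x)‖ ≤ ‖conjAlgHom f T‖ * ‖f x‖ := (conjAlgHom f T).le_opNorm _
    _ = ‖conjAlgHom f T‖ * ‖x‖ := by rw [f.norm_map]

lemma crouzeix_transfer (M : Matrix ι ι ℂ) (M' : Matrix κ κ ℂ)
    (f : EuclideanSpace ℂ ι ≃ₗᵢ[ℂ] EuclideanSpace ℂ κ)
    (hconj : ∀ x, matCLM M' (f x) = f (matCLM M x))
    (h : CrouzeixIneq M) : CrouzeixIneq M' := by
  have hM' : matCLM M' = conjAlgHom f (matCLM M) := by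
    ext1 x
    rw [conjAlgHom_apply, ← hconj, f.apply_symm_apply]
  have hrange : numRange M' = numRange M := by
    ext w
    constructor
    · rintro ⟨y, hy, rfl⟩
      refine ⟨f.symm y, by rw [f.symm.norm_map]; exact hy, ?_⟩
      rw [hM', conjAlgHom_apply]
      conv_lhs => rw [← f.apply_symm_apply y]
      rw [f.inner_map_map, f.symm_apply_apply]
    · rintro ⟨x, hx, rfl⟩
      refine ⟨f x, by rw [f.norm_map]; exact hx, ?_⟩
      rw [hM', conjAlgHom_apply, f.symm_apply_apply, f.inner_map_map]
  intro p
  rw [hrange]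
  have he : matCLM (aeval M' p) = conjAlgHom f (matCLM (aeval M p)) := by
    rw [matCLM_aeval, matCLM_aeval, hM', Polynomial.aeval_algHom_apply]
  rw [he, norm_conjAlgHom]
  exact h p

lemma numRange_abs_bddAbove (M : Matrix ι ι ℂ) (p : ℂ[X]) :
    ∃ C : ℝ, 0 ≤ C ∧ ∀ w ∈ numRange M, ‖p.eval w‖ ≤ C := by
  obtain ⟨C, hC⟩ := (isCompact_closedBall (0 : ℂ) ‖matCLM M‖).exists_bound_of_continuousOn
      (p.continuous_aeval.continuousOn)
  refine ⟨max C 0, le_max_right _ _, ?_⟩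
  rintro w ⟨x, hx, rfl⟩
  have hw : ‖(⟪x, matCLM M x⟫ : ℂ)‖ ≤ ‖matCLM M‖ := by
    calc ‖(⟪x, matCLM M x⟫ : ℂ)‖ ≤ ‖x‖ * ‖matCLM M x‖ := norm_inner_le_norm _ _
    _ ≤ ‖x‖ * (‖matCLM M‖ * ‖x‖) := by
        gcongr
        exact (matCLM M).le_opNorm x
    _ = ‖matCLM M‖ := by rw [hx]; ring
  have hmem : (⟪x, matCLM M x⟫ : ℂ) ∈ Metric.closedBall (0 : ℂ) ‖matCLM M‖ :=
    mem_closedBall_zero_iff.mpr hw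
  calc ‖p.eval ⟪x, matCLM M x⟫‖ = ‖p.eval (⟪x, matCLM M x⟫ : ℂ)‖ := rfl
  _ ≤ C := by simpa using hC _ hmem
  _ ≤ max C 0 := le_max_left _ _

lemma numRange_biSup_nonneg (M : Matrix ι ι ℂ) (p : ℂ[X]) :
    0 ≤ ⨆ z ∈ numRange M, ‖p.eval z‖ :=
  Real.iSup_nonneg fun z => Real.iSup_nonneg fun _ => norm_nonneg _

lemma le_numRange_biSup (M : Matrix ι ι ℂ) (p : ℂ[X]) {w : ℂ} (hw : w ∈ numRange M) :
    ‖p.eval w‖ ≤ ⨆ z ∈ numRange M, ‖p.eval z‖ := by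
  obtain ⟨C, hC0, hC⟩ := numRange_abs_bddAbove M p
  have hbdd : BddAbove (Set.range fun z => ⨆ _ : z ∈ numRange M, ‖p.eval z‖) := by
    refine ⟨C, ?_⟩
    rintro r ⟨z, rfl⟩
    exact Real.iSup_le (fun hz => hC z hz) hC0
  have h1 : ‖p.eval w‖ = ⨆ _ : w ∈ numRange M, ‖p.eval w‖ :=
    (ciSup_pos (f := fun _ => ‖p.eval w‖) hw).symm
  rw [h1]
  exact le_ciSup hbdd w

lemma numRange_biSup_le (M : Matrix ι ι ℂ) (p : ℂ[X]) {c : ℝ} (hc : 0 ≤ c)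
    (h : ∀ w ∈ numRange M, ‖p.eval w‖ ≤ c) :
    (⨆ z ∈ numRange M, ‖p.eval z‖) ≤ c :=
  Real.iSup_le (fun z => Real.iSup_le (fun hz => h z hz) hc) hc

end CrouzeixAux

namespace CrouzeixAux

open Polynomial Matrix

variable {m n : ℕ}

lemma euclid_norm_sq {ι : Type} [Fintype ι] (x : EuclideanSpace ℂ ι) :
    ‖x‖ ^ 2 = ∑ i, ‖x i‖ ^ 2 := by
  rw [EuclideanSpace.norm_eq, Real.sq_sqrt]
  positivity

/-- The block diagonal embedding, with blocks indexed by the first factor,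
as an algebra homomorphism. -/
noncomputable def blockAlgHom (m n : ℕ) :
    ((Fin m) → Matrix (Fin n) (Fin n) ℂ) →ₐ[ℂ] Matrix (Fin m × Fin n) (Fin m × Fin n) ℂ :=
  ((Matrix.reindexAlgEquiv ℂ ℂ (Equiv.prodComm (Fin n) (Fin m))).toAlgHom).comp
    { Matrix.blockDiagonalRingHom (Fin n) (Fin m) ℂ with
      commutes' := fun c => by
        simp only [RingHom.toMonoidHom_eq_coe, OneHom.toFun_eq_coe, MonoidHom.toOneHom_coe,
          MonoidHom.coe_coe]
        rw [Algebra.algebraMap_eq_smul_one, Algebra.algebraMap_eq_smul_one]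
        show Matrix.blockDiagonal (c • 1) = _
        rw [Matrix.blockDiagonal_smul, Matrix.blockDiagonal_one] }

lemma blockAlgHom_apply (B : Fin m → Matrix (Fin n) (Fin n) ℂ) (i j : Fin m) (k l : Fin n) :
    blockAlgHom m n B (i, k) (j, l) = if i = j then B i k l else 0 := by
  show (Matrix.reindex (Equiv.prodComm (Fin n) (Fin m)) (Equiv.prodComm (Fin n) (Fin m))
      (Matrix.blockDiagonal B)) (i, k) (j, l) = _
  rw [Matrix.reindex_apply, Matrix.submatrix_apply]
  simp [Matrix.blockDiagonal_apply, eq_comm]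

lemma norm_blockAlgHom_le (B : Fin m → Matrix (Fin n) (Fin n) ℂ) {c : ℝ} (hc : 0 ≤ c)
    (h : ∀ i, ‖matCLM (B i)‖ ≤ c) : ‖matCLM (blockAlgHom m n B)‖ ≤ c := by
  refine ContinuousLinearMap.opNorm_le_bound _ hc fun x => ?_
  set xs : Fin m → EuclideanSpace ℂ (Fin n) :=
    fun i => (WithLp.equiv 2 (Fin n → ℂ)).symm (fun l => x (i, l)) with hxs
  have hxsl : ∀ i l, xs i l = x (i, l) := fun i l => rfl
  have hyc : ∀ i k, matCLM (blockAlgHom m n B) x (i, k) = matCLM (B i) (xs i) k := by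
    intro i k
    rw [matCLM_apply, matCLM_apply, Fintype.sum_prod_type]
    rw [Finset.sum_eq_single i]
    · exact Finset.sum_congr rfl fun l _ => by rw [blockAlgHom_apply, if_pos rfl, hxsl]
    · intro j _ hj
      refine Finset.sum_eq_zero fun l _ => ?_
      rw [blockAlgHom_apply, if_neg (Ne.symm hj), zero_mul]
    · intro hi; exact absurd (Finset.mem_univ i) hi
  have hnorm2 : ‖matCLM (blockAlgHom m n B) x‖ ^ 2 ≤ (c * ‖x‖) ^ 2 := by
    have hy : ‖matCLM (blockAlgHom m n B) x‖ ^ 2 = ∑ i, ‖matCLM (B i) (xs i)‖ ^ 2 := by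
      rw [euclid_norm_sq, Fintype.sum_prod_type]
      refine Finset.sum_congr rfl fun i _ => ?_
      rw [euclid_norm_sq]
      exact Finset.sum_congr rfl fun k _ => by rw [hyc]
    have hx : ‖x‖ ^ 2 = ∑ i, ‖xs i‖ ^ 2 := by
      rw [euclid_norm_sq, Fintype.sum_prod_type]
      refine Finset.sum_congr rfl fun i _ => ?_
      rw [euclid_norm_sq]
      exact Finset.sum_congr rfl fun k _ => by rw [hxsl]
    rw [hy, mul_pow, hx, Finset.mul_sum]
    refine Finset.sum_le_sum fun i _ => ?_
    have h1 : ‖matCLM (B i) (xs i)‖ ≤ c * ‖xs i‖ :=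
      le_trans ((matCLM (B i)).le_opNorm _)
        (mul_le_mul_of_nonneg_right (h i) (norm_nonneg _))
    calc ‖matCLM (B i) (xs i)‖ ^ 2 ≤ (c * ‖xs i‖) ^ 2 :=
          pow_le_pow_left₀ (norm_nonneg _) h1 2
    _ = c ^ 2 * ‖xs i‖ ^ 2 := by ring
  have h2 := Real.sqrt_le_sqrt hnorm2
  rwa [Real.sqrt_sq (norm_nonneg _), Real.sqrt_sq (by positivity)] at h2

end CrouzeixAux

namespace CrouzeixAux

open Polynomial Matrix

variable {m n : ℕ}

lemma mem_numRange_block (μ : Fin m → ℂ) (A : Matrix (Fin n) (Fin n) ℂ) (i : Fin m) {z : ℂ}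
    (hz : z ∈ numRange A) :
    μ i * z ∈ numRange (blockAlgHom m n (fun j => μ j • A)) := by
  obtain ⟨x, hx, rfl⟩ := hz
  set y : EuclideanSpace ℂ (Fin m × Fin n) :=
    (WithLp.equiv 2 (Fin m × Fin n → ℂ)).symm (fun q => if q.1 = i then x q.2 else 0) with hy
  have hyl : ∀ j l, y (j, l) = if j = i then x l else 0 := fun j l => rfl
  have hMy : ∀ j l, matCLM (blockAlgHom m n (fun j => μ j • A)) y (j, l)
      = if j = i then μ i * ∑ l', A l l' * x l' else 0 := by
    intro j l
    rw [matCLM_apply, Fintype.sum_prod_type]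
    by_cases hj : j = i
    · subst hj
      rw [if_pos rfl, Finset.sum_eq_single j]
      · rw [Finset.mul_sum]
        refine Finset.sum_congr rfl fun l' _ => ?_
        rw [blockAlgHom_apply, if_pos rfl, hyl, if_pos rfl]
        simp [Matrix.smul_apply]
        ring
      · intro b _ hb
        refine Finset.sum_eq_zero fun l' _ => ?_
        rw [blockAlgHom_apply, if_neg (Ne.symm hb), zero_mul]
      · intro hj'; exact absurd (Finset.mem_univ j) hj'
    · rw [if_neg hj]
      refine Finset.sum_eq_zero fun b _ => Finset.sum_eq_zero fun l' _ => ?_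
      rw [blockAlgHom_apply, hyl]
      by_cases hbj : j = b
      · subst hbj
        rw [if_neg hj, mul_zero]
      · rw [if_neg hbj, zero_mul]
  refine ⟨y, ?_, ?_⟩
  · rw [EuclideanSpace.norm_eq]
    have : ∑ q : Fin m × Fin n, ‖y q‖ ^ 2 = 1 := by
      rw [Fintype.sum_prod_type, Finset.sum_eq_single i]
      · have : ∑ l, ‖y (i, l)‖ ^ 2 = ‖x‖ ^ 2 := by
          rw [euclid_norm_sq]
          exact Finset.sum_congr rfl fun l _ => by rw [hyl, if_pos rfl]
        rw [this, hx, one_pow]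
      · intro j _ hj
        refine Finset.sum_eq_zero fun l _ => ?_
        rw [hyl, if_neg hj, norm_zero, zero_pow two_ne_zero]
      · intro hi; exact absurd (Finset.mem_univ i) hi
    rw [this, Real.sqrt_one]
  · rw [PiLp.inner_apply, PiLp.inner_apply, Fintype.sum_prod_type, Finset.sum_eq_single i]
    · rw [Finset.mul_sum]
      refine Finset.sum_congr rfl fun l _ => ?_
      rw [hyl, if_pos rfl, hMy, if_pos rfl, matCLM_apply]
      simp only [RCLike.inner_apply, starRingEnd_apply]
      ring
    · intro j _ hj
      refine Finset.sum_eq_zero fun l _ => ?_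
      rw [hyl, if_neg hj, hMy, if_neg hj]
      simp
    · intro hi; exact absurd (Finset.mem_univ i) hi

end CrouzeixAux

namespace CrouzeixAux

open Polynomial Matrix

set_option maxHeartbeats 1000000 in
lemma exists_eigenbasis {m : ℕ} (N : Matrix (Fin m) (Fin m) ℂ)
    (hN : N.conjTranspose * N = N * N.conjTranspose) :
    ∃ (b : OrthonormalBasis (Fin m) ℂ (EuclideanSpace ℂ (Fin m))) (μ : Fin m → ℂ),
      ∀ i, matCLM N (b i) = μ i • b i := by
  classical
  let E : Type := EuclideanSpace ℂ (Fin m)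
  set T : EuclideanSpace ℂ (Fin m) →L[ℂ] EuclideanSpace ℂ (Fin m) := matCLM N with hT
  have hTT : star T * T = T * star T := by
    have h := congrArg matCLM hN
    rw [matCLM_mul, matCLM_mul] at h
    rw [hT, ← matCLM_star]
    exact h
  have hadj : star T = ContinuousLinearMap.adjoint T := ContinuousLinearMap.star_eq_adjoint T
  set H := T + star T with hH
  set K := Complex.I • (star T - T) with hK
  have hsymH : (↑H : EuclideanSpace ℂ (Fin m) →ₗ[ℂ] EuclideanSpace ℂ (Fin m)).IsSymmetric := by
    intro x y
    show (⟪H x, y⟫ : ℂ) = ⟪x, H y⟫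
    rw [hH]
    simp only [ContinuousLinearMap.add_apply]
    rw [inner_add_left, inner_add_right, hadj,
      ContinuousLinearMap.adjoint_inner_left, ← ContinuousLinearMap.adjoint_inner_right]
    ring
  have hsymK : (↑K : EuclideanSpace ℂ (Fin m) →ₗ[ℂ] EuclideanSpace ℂ (Fin m)).IsSymmetric := by
    intro x y
    show (⟪K x, y⟫ : ℂ) = ⟪x, K y⟫
    rw [hK]
    simp only [ContinuousLinearMap.smul_apply, ContinuousLinearMap.sub_apply]
    rw [inner_smul_left, inner_smul_right, inner_sub_left, inner_sub_right, hadj,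
      ContinuousLinearMap.adjoint_inner_left, ContinuousLinearMap.adjoint_inner_right]
    simp only [Complex.conj_I]
    ring
  have hcommL : Commute (↑H : EuclideanSpace ℂ (Fin m) →ₗ[ℂ] EuclideanSpace ℂ (Fin m)) (↑K : EuclideanSpace ℂ (Fin m) →ₗ[ℂ] EuclideanSpace ℂ (Fin m)) := by
    have hc : H * K = K * H := by
      rw [hH, hK, mul_smul_comm, smul_mul_assoc]
      congr 1
      rw [add_mul, mul_sub, mul_sub, sub_mul, mul_add, mul_add, hTT]
      abel
    show (↑H : EuclideanSpace ℂ (Fin m) →ₗ[ℂ] EuclideanSpace ℂ (Fin m)) * ↑K = ↑K * ↑H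
    refine LinearMap.ext fun x => ?_
    have := congrArg (fun S : EuclideanSpace ℂ (Fin m) →L[ℂ] EuclideanSpace ℂ (Fin m) => S x) hc
    simpa [Module.End.mul_apply, ContinuousLinearMap.mul_apply] using this
  have internal := LinearMap.IsSymmetric.directSum_isInternal_of_commute hsymH hsymK hcommL
  have orth := LinearMap.IsSymmetric.orthogonalFamily_eigenspace_inf_eigenspace hsymH hsymK
  set V : ℂ × ℂ → Submodule ℂ (EuclideanSpace ℂ (Fin m)) := fun c =>
    Module.End.eigenspace (↑H : EuclideanSpace ℂ (Fin m) →ₗ[ℂ] EuclideanSpace ℂ (Fin m)) c.2 ⊓ Module.End.eigenspace (↑K : EuclideanSpace ℂ (Fin m) →ₗ[ℂ] EuclideanSpace ℂ (Fin m)) c.1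
    with hV
  obtain ⟨hind, hsup⟩ :=
    (DirectSum.isInternal_submodule_iff_iSupIndep_and_iSup_eq_top V).mp internal
  haveI : Fintype {c : ℂ × ℂ // V c ≠ ⊥} := hind.fintypeNeBotOfFiniteDimensional
  have hind' : iSupIndep (fun c : {c : ℂ × ℂ // V c ≠ ⊥} => V c) :=
    hind.comp Subtype.val_injective
  have hsup' : ⨆ c : {c : ℂ × ℂ // V c ≠ ⊥}, V c = ⊤ := by
    rw [← hsup]
    refine le_antisymm (iSup_le fun c => le_iSup V c.1) (iSup_le fun c => ?_)
    by_cases h : V c = ⊥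
    · rw [h]; exact bot_le
    · exact le_iSup_of_le (⟨c, h⟩ : {c : ℂ × ℂ // V c ≠ ⊥}) le_rfl
  have internal' : DirectSum.IsInternal (fun c : {c : ℂ × ℂ // V c ≠ ⊥} => V c) :=
    (DirectSum.isInternal_submodule_iff_iSupIndep_and_iSup_eq_top _).mpr ⟨hind', hsup'⟩
  have orth' := orth.comp (Subtype.val_injective : Function.Injective
      (Subtype.val : {c : ℂ × ℂ // V c ≠ ⊥} → ℂ × ℂ))
  have hrank : Module.finrank ℂ (EuclideanSpace ℂ (Fin m)) = m := finrank_euclideanSpace_fin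
  set b := internal'.subordinateOrthonormalBasis hrank orth' with hb
  refine ⟨b, fun i =>
    (((internal'.subordinateOrthonormalBasisIndex hrank i orth' : {c : ℂ × ℂ // V c ≠ ⊥})
      : ℂ × ℂ).2
      + Complex.I * ((internal'.subordinateOrthonormalBasisIndex hrank i orth'
      : {c : ℂ × ℂ // V c ≠ ⊥}) : ℂ × ℂ).1) / 2, fun i => ?_⟩
  have hmem := internal'.subordinateOrthonormalBasis_subordinate hrank i orth'
  set c := ((internal'.subordinateOrthonormalBasisIndex hrank i orth'
      : {c : ℂ × ℂ // V c ≠ ⊥}) : ℂ × ℂ) with hc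
  obtain ⟨hmemH, hmemK⟩ := hmem
  have hHb : H (b i) = c.2 • b i := Module.End.mem_eigenspace_iff.mp hmemH
  have hKb : K (b i) = c.1 • b i := Module.End.mem_eigenspace_iff.mp hmemK
  have hT2 : (2 : ℂ) • T (b i) = H (b i) + Complex.I • K (b i) := by
    rw [hH, hK]
    simp only [ContinuousLinearMap.add_apply, ContinuousLinearMap.smul_apply,
      ContinuousLinearMap.sub_apply, smul_smul, Complex.I_mul_I, neg_smul, one_smul, smul_sub]
    rw [two_smul]
    abel
  have h2 : (2 : ℂ) • T (b i) = (c.2 + Complex.I * c.1) • b i := by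
    rw [hT2, hHb, hKb, smul_smul, ← add_smul]
  have := congrArg (fun v : EuclideanSpace ℂ (Fin m) => ((2 : ℂ)⁻¹ : ℂ) • v) h2
  simp only [smul_smul] at this
  rw [inv_mul_cancel₀ (two_ne_zero), one_smul] at this
  rw [this]
  show _ = ((c.2 + Complex.I * c.1) / 2) • b i
  congr 1
  ring

end CrouzeixAux

namespace CrouzeixAux

open Polynomial Matrix

variable {m n : ℕ}

lemma crouzeix_block (A : Matrix (Fin n) (Fin n) ℂ) (hA : CrouzeixIneq A) (μ : Fin m → ℂ) :
    CrouzeixIneq (blockAlgHom m n (fun i => μ i • A)) := by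
  intro p
  set M₀ := blockAlgHom m n (fun i => μ i • A) with hM₀
  set S := ⨆ z ∈ numRange M₀, ‖p.eval z‖ with hS
  have hS0 : 0 ≤ S := numRange_biSup_nonneg _ _
  have haev : aeval M₀ p = blockAlgHom m n (fun i => aeval (μ i • A) p) := by
    have h1 := Polynomial.aeval_algHom_apply (blockAlgHom m n) (fun i => μ i • A) p
    rw [hM₀, h1]
    congr 1
    funext i
    exact (Polynomial.aeval_algHom_apply
      (Pi.evalAlgHom ℂ (fun _ => Matrix (Fin n) (Fin n) ℂ) i) _ p).symm
  rw [haev]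
  refine norm_blockAlgHom_le _ (by positivity) fun i => ?_
  have hq : aeval (μ i • A) p = aeval A (p.comp (C (μ i) * X)) := by
    rw [Polynomial.aeval_comp]
    congr 1
    rw [_root_.map_mul, Polynomial.aeval_C, Polynomial.aeval_X, ← Algebra.smul_def]
  rw [hq]
  refine le_trans (hA _) ?_
  have hle : (⨆ z ∈ numRange A, ‖(p.comp (C (μ i) * X)).eval z‖) ≤ S := by
    refine numRange_biSup_le A _ hS0 fun w hw => ?_
    rw [Polynomial.eval_comp]
    simp only [eval_mul, eval_C, eval_X]
    exact le_numRange_biSup M₀ p (mem_numRange_block μ A i hw)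
  linarith

noncomputable def unitaryIso {ι : Type} [Fintype ι] [DecidableEq ι] (U : Matrix ι ι ℂ)
    (hU : star U * U = 1) : EuclideanSpace ℂ ι ≃ₗᵢ[ℂ] EuclideanSpace ℂ ι :=
  LinearEquiv.isometryOfInner
    (LinearEquiv.ofLinear (matCLM U).toLinearMap (matCLM (star U)).toLinearMap
      (by
        refine LinearMap.ext fun x => ?_
        show matCLM U (matCLM (star U) x) = x
        rw [← ContinuousLinearMap.mul_apply, ← matCLM_mul, mul_eq_one_comm.mp hU,
          matCLM_one, ContinuousLinearMap.one_apply])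
      (by
        refine LinearMap.ext fun x => ?_
        show matCLM (star U) (matCLM U x) = x
        rw [← ContinuousLinearMap.mul_apply, ← matCLM_mul, hU,
          matCLM_one, ContinuousLinearMap.one_apply]))
    (by
      intro x y
      show (⟪matCLM U x, matCLM U y⟫ : ℂ) = ⟪x, y⟫
      have h3 : matCLM (star U) (matCLM U y) = y := by
        rw [← ContinuousLinearMap.mul_apply, ← matCLM_mul, hU,
          matCLM_one, ContinuousLinearMap.one_apply]
      have h4 : (⟪x, matCLM (star U) (matCLM U y)⟫ : ℂ) = ⟪matCLM U x, matCLM U y⟫ := by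
        rw [matCLM_star, ContinuousLinearMap.star_eq_adjoint,
          ContinuousLinearMap.adjoint_inner_right]
      rw [← h4, h3])

lemma unitaryIso_apply {ι : Type} [Fintype ι] [DecidableEq ι] (U : Matrix ι ι ℂ)
    (hU : star U * U = 1) (x : EuclideanSpace ℂ ι) : unitaryIso U hU x = matCLM U x := rfl

end CrouzeixAux

namespace CrouzeixAux

open Polynomial Matrix

variable {m n : ℕ}

open scoped Kronecker

lemma kron_star {ι κ : Type} [Fintype ι] [DecidableEq ι] [Fintype κ] [DecidableEq κ]
    (X : Matrix ι ι ℂ) (Y : Matrix κ κ ℂ) :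
    star (Matrix.kroneckerMap (· * ·) X Y) = Matrix.kroneckerMap (· * ·) (star X) (star Y) := by
  ext q q'
  simp only [Matrix.star_eq_conjTranspose, Matrix.conjTranspose_apply,
    Matrix.kroneckerMap_apply, star_mul']

lemma crouzeix_kron_left (A : Matrix (Fin n) (Fin n) ℂ) (hA : CrouzeixIneq A)
    (N : Matrix (Fin m) (Fin m) ℂ) (hN : N.conjTranspose * N = N * N.conjTranspose) :
    CrouzeixIneq (Matrix.kroneckerMap (· * ·) N A) := by
  classical
  obtain ⟨b, μ, hb⟩ := exists_eigenbasis N hN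
  set U : Matrix (Fin m) (Fin m) ℂ := Matrix.of fun j i => b i j with hUdef
  have hUU : star U * U = 1 := by
    ext i i'
    have key : (⟪b i, b i'⟫ : ℂ) = if i = i' then 1 else 0 :=
      orthonormal_iff_ite.mp b.orthonormal i i'
    rw [PiLp.inner_apply] at key
    simp only [RCLike.inner_apply, starRingEnd_apply] at key
    simp only [Matrix.star_eq_conjTranspose, Matrix.mul_apply, Matrix.conjTranspose_apply,
      Matrix.one_apply, hUdef, Matrix.of_apply]
    rw [← key]
    exact Finset.sum_congr rfl fun j _ => mul_comm _ _
  have hU' : U * star U = 1 := mul_eq_one_comm.mp hUU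
  set D : Matrix (Fin m) (Fin m) ℂ := Matrix.diagonal μ with hDdef
  have hNU : N * U = U * D := by
    ext j i
    have h1 : matCLM N (b i) j = ∑ k, N j k * b i k := matCLM_apply N (b i) j
    have h2 : matCLM N (b i) j = μ i * b i j := by rw [hb i]; rfl
    rw [Matrix.mul_apply, hDdef, Matrix.mul_diagonal]
    simp only [hUdef, Matrix.of_apply]
    rw [← h1, h2]
    ring
  have hNdec : N = U * D * star U := by
    calc N = N * (U * star U) := by rw [hU', mul_one]
    _ = (N * U) * star U := by rw [mul_assoc]
    _ = U * D * star U := by rw [hNU]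
  set W : Matrix (Fin m × Fin n) (Fin m × Fin n) ℂ :=
    Matrix.kroneckerMap (· * ·) U (1 : Matrix (Fin n) (Fin n) ℂ) with hWdef
  have hWW : star W * W = 1 := by
    rw [hWdef, kron_star, star_one]
    rw [show star U ⊗ₖ (1 : Matrix (Fin n) (Fin n) ℂ) * U ⊗ₖ 1
        = (star U * U) ⊗ₖ ((1 : Matrix (Fin n) (Fin n) ℂ) * 1) from
      (Matrix.mul_kronecker_mul _ _ _ _).symm]
    rw [hUU, one_mul, Matrix.one_kronecker_one]
  have hDA : Matrix.kroneckerMap (· * ·) D A = blockAlgHom m n (fun i => μ i • A) := by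
    ext ⟨i, k⟩ ⟨j, l⟩
    rw [Matrix.kroneckerMap_apply, blockAlgHom_apply, hDdef, Matrix.diagonal_apply]
    by_cases h : i = j
    · rw [if_pos h, if_pos h]; simp [Matrix.smul_apply]
    · rw [if_neg h, if_neg h, zero_mul]
  have hNA : Matrix.kroneckerMap (· * ·) N A = W * (Matrix.kroneckerMap (· * ·) D A) * star W := by
    rw [hWdef, kron_star, star_one]
    calc Matrix.kroneckerMap (· * ·) N A
        = Matrix.kroneckerMap (· * ·) (U * D * star U) A := by rw [← hNdec]
    _ = Matrix.kroneckerMap (· * ·) (U * D * star U)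
          ((1 : Matrix (Fin n) (Fin n) ℂ) * A * 1) := by rw [one_mul, mul_one]
    _ = (U ⊗ₖ (1 : Matrix (Fin n) (Fin n) ℂ)) * (D ⊗ₖ A) * (star U ⊗ₖ 1) := by
        rw [Matrix.mul_kronecker_mul, Matrix.mul_kronecker_mul]
  have hcomm : (Matrix.kroneckerMap (· * ·) N A) * W = W * (Matrix.kroneckerMap (· * ·) D A) := by
    rw [hNA, mul_assoc, mul_assoc, hWW, mul_one]
  refine crouzeix_transfer (blockAlgHom m n (fun i => μ i • A)) _ (unitaryIso W hWW) ?_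
      (crouzeix_block A hA μ)
  intro x
  rw [unitaryIso_apply, unitaryIso_apply, ← ContinuousLinearMap.mul_apply, ← matCLM_mul, hcomm,
    hDA, matCLM_mul, ContinuousLinearMap.mul_apply]

end CrouzeixAux

namespace CrouzeixAux

open Polynomial Matrix

variable {m n : ℕ}

lemma crouzeix_kron_right (A : Matrix (Fin n) (Fin n) ℂ) (N : Matrix (Fin m) (Fin m) ℂ)
    (h : CrouzeixIneq (Matrix.kroneckerMap (· * ·) N A)) :
    CrouzeixIneq (Matrix.kroneckerMap (· * ·) A N) := by
  refine crouzeix_transfer _ _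
    (LinearIsometryEquiv.piLpCongrLeft 2 ℂ ℂ (Equiv.prodComm (Fin m) (Fin n))) ?_ h
  intro x
  ext q
  have h1 : matCLM (Matrix.kroneckerMap (· * ·) A N)
      (LinearIsometryEquiv.piLpCongrLeft 2 ℂ ℂ (Equiv.prodComm (Fin m) (Fin n)) x) q
      = ∑ q', Matrix.kroneckerMap (· * ·) A N q q' * x (q'.2, q'.1) := by
    rw [matCLM_apply]
    exact Finset.sum_congr rfl fun j _ => rfl
  have h2 : (LinearIsometryEquiv.piLpCongrLeft 2 ℂ ℂ (Equiv.prodComm (Fin m) (Fin n))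
      (matCLM (Matrix.kroneckerMap (· * ·) N A) x)) q
      = ∑ j, Matrix.kroneckerMap (· * ·) N A (q.2, q.1) j * x j := by
    show (matCLM (Matrix.kroneckerMap (· * ·) N A) x) (q.2, q.1) = _
    rw [matCLM_apply]
  rw [h1, h2]
  refine Fintype.sum_equiv (Equiv.prodComm (Fin n) (Fin m)) _ _ fun q' => ?_
  simp only [Matrix.kroneckerMap_apply, Equiv.prodComm_apply, Prod.fst_swap, Prod.snd_swap]
  rw [show x q'.swap = x (q'.2, q'.1) from rfl]
  ring

end CrouzeixAux


/-- If `A` satisfies the Crouzeix inequality and `N` is normal, then the Kronecker products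
`N ⊗ A` and `A ⊗ N` satisfy the Crouzeix inequality. -/
theorem crouzeix_kronecker_normal {n m : ℕ} (A : Matrix (Fin n) (Fin n) ℂ)
    (hA : CrouzeixIneq A) (N : Matrix (Fin m) (Fin m) ℂ)
    (hN : N.conjTranspose * N = N * N.conjTranspose) :
    CrouzeixIneq (Matrix.kroneckerMap (· * ·) N A) ∧
      CrouzeixIneq (Matrix.kroneckerMap (· * ·) A N) :=
  ⟨CrouzeixAux.crouzeix_kron_left A hA N hN,
    CrouzeixAux.crouzeix_kron_right A N (CrouzeixAux.crouzeix_kron_left A hA N hN)⟩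
end

section
/- Let n be a positive integer. If every n×n complex matrix satisfies the Crouzeix inequality, then every non-cyclic (n+1)×(n+1) complex matrix satisfies the Crouzeix inequality. -/
open scoped ComplexInnerProductSpace

/-- A square matrix is cyclic if some vector `y` has cyclic subspace
`span {y, Ay, A²y, …}` equal to the whole space. -/
def MatCyclic {ι : Type} [Fintype ι] [DecidableEq ι] (A : Matrix ι ι ℂ) : Prop :=
  ∃ y : ι → ℂ, Submodule.span ℂ (Set.range fun k : ℕ => (A ^ k).mulVec y) = ⊤

lemma matCLM_pow_apply {m : ℕ} (A : Matrix (Fin m) (Fin m) ℂ) (x : EuclideanSpace ℂ (Fin m))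
    (k : ℕ) : ((matCLM A) ^ k) x = (A ^ k).mulVec x := by
  rw [show (matCLM A) ^ k = matCLM (A ^ k) from (map_pow _ _ _).symm]
  rfl

open Module Submodule in
lemma exists_intermediate_submodule {𝕜 V : Type*} [Field 𝕜] [AddCommGroup V] [Module 𝕜 V]
    [FiniteDimensional 𝕜 V] (K : Submodule 𝕜 V) (m : ℕ) (h1 : finrank 𝕜 K ≤ m)
    (h2 : m ≤ finrank 𝕜 V) : ∃ W : Submodule 𝕜 V, K ≤ W ∧ finrank 𝕜 W = m := by
  obtain ⟨d, hd⟩ := Nat.exists_eq_add_of_le h1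
  clear h1
  induction d generalizing K with
  | zero => exact ⟨K, le_rfl, by omega⟩
  | succ d ih =>
      have hlt : finrank 𝕜 K < finrank 𝕜 V := by omega
      obtain ⟨x, hx⟩ := K.exists_of_finrank_lt hlt
      have hxK : x ∉ K := by simpa using hx 1 one_ne_zero
      have hx0 : x ≠ 0 := fun h => hxK (h ▸ K.zero_mem)
      have hinf : K ⊓ span 𝕜 {x} = ⊥ := by
        rw [eq_bot_iff]
        rintro y ⟨hyK, hyx⟩
        obtain ⟨c, rfl⟩ := mem_span_singleton.mp hyx
        rcases eq_or_ne c 0 with rfl | hc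
        · simp
        · exact absurd hyK (hx c hc)
      have hrank : finrank 𝕜 (K ⊔ span 𝕜 {x} : Submodule 𝕜 V) = finrank 𝕜 K + 1 := by
        have := Submodule.finrank_sup_add_finrank_inf_eq K (span 𝕜 {x})
        rw [hinf, finrank_bot, finrank_span_singleton hx0] at this
        omega
      obtain ⟨W, hW1, hW2⟩ := ih (K ⊔ span 𝕜 {x}) (by omega)
      exact ⟨W, le_trans le_sup_left hW1, hW2⟩

section comp
variable {E : Type} [NormedAddCommGroup E] [InnerProductSpace ℂ E] [FiniteDimensional ℂ E]

/-- Compression of an operator to a subspace. -/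
noncomputable def compr (T : E →L[ℂ] E) (V : Submodule ℂ E) : V →L[ℂ] V :=
  (Submodule.orthogonalProjectionOnto V).comp (T.comp V.subtypeL)

lemma compr_pow (T : E →L[ℂ] E) (K V : Submodule ℂ E) (hKV : K ≤ V)
    (hTK : ∀ y ∈ K, T y ∈ K) (k : ℕ) (v : V) (hv : (v : E) ∈ K) :
    (((compr T V) ^ k) v : E) = (T ^ k) (v : E) ∧ (T ^ k) (v : E) ∈ K := by
  induction k generalizing v with
  | zero => simpa using hv
  | succ k ih =>
      have hTv : T (v : E) ∈ K := hTK _ hv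
      have hDv : (compr T V) v = ⟨T (v : E), hKV hTv⟩ := by
        have := Submodule.orthogonalProjection_mem_subspace_eq_self (K := V) ⟨T (v : E), hKV hTv⟩
        simpa [compr] using this
      have h := ih ⟨T (v : E), hKV hTv⟩ hTv
      constructor
      · rw [pow_succ, ContinuousLinearMap.mul_apply, hDv, h.1]
        rw [pow_succ, ContinuousLinearMap.mul_apply]
      · rw [pow_succ, ContinuousLinearMap.mul_apply]
        exact h.2

lemma compr_aeval (T : E →L[ℂ] E) (K V : Submodule ℂ E) (hKV : K ≤ V)
    (hTK : ∀ y ∈ K, T y ∈ K) (p : Polynomial ℂ) (v : V) (hv : (v : E) ∈ K) :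
    ((Polynomial.aeval (compr T V) p v : V) : E) = Polynomial.aeval T p (v : E) ∧
      Polynomial.aeval T p (v : E) ∈ K := by
  induction p using Polynomial.induction_on' with
  | add f g hf hg =>
      refine ⟨?_, ?_⟩
      · simp only [map_add, ContinuousLinearMap.add_apply, Submodule.coe_add, hf.1, hg.1]
      · simp only [map_add, ContinuousLinearMap.add_apply]
        exact K.add_mem hf.2 hg.2
  | monomial k c =>
      have h := compr_pow T K V hKV hTK k v hv
      refine ⟨?_, ?_⟩
      · simp only [Polynomial.aeval_monomial, Algebra.algebraMap_eq_smul_one,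
          ContinuousLinearMap.mul_apply, ContinuousLinearMap.smul_apply,
          ContinuousLinearMap.one_apply, Submodule.coe_smul, h.1]
      · simp only [Polynomial.aeval_monomial, Algebra.algebraMap_eq_smul_one,
          ContinuousLinearMap.mul_apply, ContinuousLinearMap.smul_apply,
          ContinuousLinearMap.one_apply]
        exact K.smul_mem c h.2

/-- Conjugation of an operator by a linear isometry equivalence onto a Euclidean space. -/
noncomputable def conjOp {V : Submodule ℂ E} (D : V →L[ℂ] V) {m : ℕ}
    (f : V ≃ₗᵢ[ℂ] EuclideanSpace ℂ (Fin m)) :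
    EuclideanSpace ℂ (Fin m) →L[ℂ] EuclideanSpace ℂ (Fin m) :=
  (f.toLinearIsometry.toContinuousLinearMap.comp D).comp
    f.symm.toLinearIsometry.toContinuousLinearMap

lemma conjOp_apply {V : Submodule ℂ E} (D : V →L[ℂ] V) {m : ℕ}
    (f : V ≃ₗᵢ[ℂ] EuclideanSpace ℂ (Fin m)) (v : V) : conjOp D f (f v) = f (D v) := by
  simp [conjOp]

lemma conjOp_pow {V : Submodule ℂ E} (D : V →L[ℂ] V) {m : ℕ}
    (f : V ≃ₗᵢ[ℂ] EuclideanSpace ℂ (Fin m)) (k : ℕ) (v : V) :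
    ((conjOp D f) ^ k) (f v) = f ((D ^ k) v) := by
  induction k generalizing v with
  | zero => simp
  | succ k ih =>
      rw [pow_succ, ContinuousLinearMap.mul_apply, conjOp_apply, ih,
        pow_succ, ContinuousLinearMap.mul_apply]

lemma conjOp_aeval {V : Submodule ℂ E} (D : V →L[ℂ] V) {m : ℕ}
    (f : V ≃ₗᵢ[ℂ] EuclideanSpace ℂ (Fin m)) (p : Polynomial ℂ) (v : V) :
    Polynomial.aeval (conjOp D f) p (f v) = f (Polynomial.aeval D p v) := by
  induction p using Polynomial.induction_on' with
  | add a b ha hb =>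
      simp only [map_add, ContinuousLinearMap.add_apply, ha, hb]
  | monomial k c =>
      simp only [Polynomial.aeval_monomial, Algebra.algebraMap_eq_smul_one,
        ContinuousLinearMap.mul_apply, ContinuousLinearMap.smul_apply,
        ContinuousLinearMap.one_apply, conjOp_pow, map_smul]
lemma conjOp_norm_aeval (T : E →L[ℂ] E) (K V : Submodule ℂ E) (hKV : K ≤ V)
    (hTK : ∀ y ∈ K, T y ∈ K) {m : ℕ} (f : V ≃ₗᵢ[ℂ] EuclideanSpace ℂ (Fin m))
    (p : Polynomial ℂ) (x : E) (hx : x ∈ K) :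
    ‖Polynomial.aeval T p x‖ ≤ ‖Polynomial.aeval (conjOp (compr T V) f) p‖ * ‖x‖ := by
  have hxV : x ∈ V := hKV hx
  have hae := compr_aeval T K V hKV hTK p ⟨x, hxV⟩ hx
  have h1 : ‖Polynomial.aeval T p x‖ =
      ‖Polynomial.aeval (conjOp (compr T V) f) p (f ⟨x, hxV⟩)‖ := by
    rw [conjOp_aeval, f.norm_map,
      show Polynomial.aeval T p x = ((Polynomial.aeval (compr T V) p ⟨x, hxV⟩ : V) : E) from
        hae.1.symm, Submodule.norm_coe]
  have h2 : ‖f ⟨x, hxV⟩‖ = ‖x‖ := by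
    rw [f.norm_map]; rfl
  rw [h1, ← h2]
  exact ContinuousLinearMap.le_opNorm _ _

lemma conjOp_mem_numRange (T : E →L[ℂ] E) (V : Submodule ℂ E) {m : ℕ}
    (f : V ≃ₗᵢ[ℂ] EuclideanSpace ℂ (Fin m)) (u : EuclideanSpace ℂ (Fin m)) :
    ∃ v : E, ‖v‖ = ‖u‖ ∧
      (⟪u, (conjOp (compr T V) f) u⟫ : ℂ) = (⟪v, T v⟫ : ℂ) := by
  obtain ⟨w, rfl⟩ : ∃ w : V, f w = u := ⟨f.symm u, f.apply_symm_apply u⟩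
  refine ⟨(w : E), ?_, ?_⟩
  · rw [f.norm_map, Submodule.norm_coe]
  · rw [conjOp_apply, f.inner_map_map, Submodule.coe_inner]
    have hDv : ((compr T V) w : E) = Submodule.orthogonalProjectionOnto V (T (w : E)) := rfl
    have horth : (⟪(w : E), T (w : E) - Submodule.orthogonalProjectionOnto V (T (w : E))⟫ : ℂ) = 0 := by
      have hmem : T (w : E) - Submodule.orthogonalProjectionOnto V (T (w : E)) ∈ Vᗮ :=
        Submodule.sub_starProjection_mem_orthogonal (K := V) _
      exact (Submodule.mem_orthogonal V _).mp hmem (w : E) w.2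
    rw [inner_sub_right, sub_eq_zero] at horth
    rw [hDv, ← horth]

end comp

/-- If every `n × n` matrix satisfies the Crouzeix inequality, then every non-cyclic
`(n+1) × (n+1)` matrix satisfies the Crouzeix inequality. -/
theorem crouzeix_noncyclic_succ {n : ℕ} (hn : 0 < n)
    (h : ∀ B : Matrix (Fin n) (Fin n) ℂ, CrouzeixIneq B)
    (A : Matrix (Fin (n + 1)) (Fin (n + 1)) ℂ) (hA : ¬ MatCyclic A) :
    CrouzeixIneq A := by
  classical
  intro p
  obtain ⟨T, hT⟩ : ∃ T : EuclideanSpace ℂ (Fin (n + 1)) →L[ℂ] EuclideanSpace ℂ (Fin (n + 1)),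
      T = matCLM A := ⟨_, rfl⟩
  obtain ⟨F, hF⟩ : ∃ F : ℂ → ℝ, F = fun z => ‖Polynomial.eval z p‖ := ⟨_, rfl⟩
  obtain ⟨S, hS⟩ : ∃ S : ℝ, S = ⨆ z ∈ numRange A, F z := ⟨_, rfl⟩
  -- S is nonnegative
  have hS0 : 0 ≤ S := by
    rw [hS]
    exact Real.iSup_nonneg fun z => Real.iSup_nonneg fun _ => by rw [hF]; positivity
  -- the numerical range is compact, giving a bound for `F` on it
  have hcomp : IsCompact
      ((fun x : EuclideanSpace ℂ (Fin (n + 1)) => (⟪x, T x⟫ : ℂ)) '' Metric.sphere 0 1) := by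
    refine (isCompact_sphere 0 1).image ?_
    exact Continuous.inner continuous_id T.continuous
  have hnr : numRange A =
      (fun x : EuclideanSpace ℂ (Fin (n + 1)) => (⟪x, T x⟫ : ℂ)) '' Metric.sphere 0 1 := by
    rw [hT]
    ext z
    constructor
    · rintro ⟨x, hx1, rfl⟩
      exact ⟨x, by simpa using hx1, rfl⟩
    · rintro ⟨x, hx1, rfl⟩
      exact ⟨x, by simpa using hx1, rfl⟩
  have hFcont : Continuous F := by
    rw [hF]
    exact continuous_norm.comp (Polynomial.continuous_aeval p)
  have hbdd : BddAbove (F '' numRange A) := by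
    rw [hnr]
    exact (hcomp.image hFcont).bddAbove
  obtain ⟨M, hM⟩ := hbdd
  -- every value of `F` on the numerical range is at most `S`
  have hFS : ∀ z ∈ numRange A, F z ≤ S := by
    intro z hz
    have hg : ∀ w : ℂ, (⨆ _ : w ∈ numRange A, F w) ≤ max M 0 := by
      intro w
      refine Real.iSup_le (fun hw => ?_) (le_max_right _ _)
      exact le_trans (hM (Set.mem_image_of_mem F hw)) (le_max_left _ _)
    have hbdd' : BddAbove (Set.range fun w : ℂ => ⨆ _ : w ∈ numRange A, F w) := by
      refine ⟨max M 0, ?_⟩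
      rintro y ⟨w, rfl⟩
      exact hg w
    rw [hS]
    calc F z = ⨆ _ : z ∈ numRange A, F z := (ciSup_pos (f := fun _ => F z) hz).symm
    _ ≤ ⨆ w ∈ numRange A, F w := le_ciSup hbdd' z
  -- it suffices to bound `p(T) x` for each `x`
  rw [matCLM_aeval]
  have hgoal2 : (⨆ z ∈ numRange A, ‖Polynomial.eval z p‖) = S := by
    rw [hS, hF]
  rw [hgoal2, ← hT]
  refine ContinuousLinearMap.opNorm_le_bound _ (by positivity) fun x => ?_
  -- the cyclic subspace of x
  obtain ⟨K, hK⟩ : ∃ K : Submodule ℂ (EuclideanSpace ℂ (Fin (n + 1))),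
      K = Submodule.span ℂ (Set.range fun k : ℕ => (T ^ k) x) := ⟨_, rfl⟩
  have hKtop : K ≠ ⊤ := by
    intro hKt
    apply hA
    refine ⟨x, ?_⟩
    have heq : (Set.range fun k : ℕ => (A ^ k).mulVec x) =
        (WithLp.linearEquiv 2 ℂ (Fin (n + 1) → ℂ)) '' (Set.range fun k : ℕ => (T ^ k) x) := by
      rw [← Set.range_comp]; congr 1; funext k; show _ = WithLp.ofLp ((T ^ k) x); rw [hT, matCLM_pow_apply]
    rw [heq, ← LinearEquiv.coe_coe, ← Submodule.map_span, ← hK, hKt, Submodule.map_top, LinearEquiv.range]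
  have hxK : x ∈ K := by
    rw [hK]
    apply Submodule.subset_span
    exact ⟨0, by simp⟩
  have hTK : ∀ y ∈ K, T y ∈ K := by
    rw [hK]
    intro y hy
    induction hy using Submodule.span_induction with
    | mem y hy =>
        obtain ⟨k, rfl⟩ := hy
        apply Submodule.subset_span
        refine ⟨k + 1, ?_⟩
        show (T ^ (k + 1)) x = T ((T ^ k) x)
        rw [pow_succ', ContinuousLinearMap.mul_apply]
    | zero => simp
    | add a b _ _ ha hb => rw [map_add]; exact Submodule.add_mem _ ha hb
    | smul c a _ ha => rw [map_smul]; exact Submodule.smul_mem _ c ha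
  have hdimE : Module.finrank ℂ (EuclideanSpace ℂ (Fin (n + 1))) = n + 1 :=
    finrank_euclideanSpace_fin
  have hdimK : Module.finrank ℂ K ≤ n := by
    have := Submodule.finrank_lt (K := ℂ) hKtop
    omega
  obtain ⟨V, hKV, hdimV⟩ := exists_intermediate_submodule K n hdimK (by omega)
  -- orthonormal basis of V, as an isometry onto EuclideanSpace ℂ (Fin n)
  obtain ⟨f, -⟩ : ∃ f : V ≃ₗᵢ[ℂ] EuclideanSpace ℂ (Fin n),
      f = ((stdOrthonormalBasis ℂ V).reindex (finCongr hdimV)).repr := ⟨_, rfl⟩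
  obtain ⟨D, hD⟩ : ∃ D : V →L[ℂ] V, D = compr T V := ⟨_, rfl⟩
  obtain ⟨Cop, hCop⟩ : ∃ Cop : EuclideanSpace ℂ (Fin n) →L[ℂ] EuclideanSpace ℂ (Fin n),
      Cop = conjOp D f := ⟨_, rfl⟩
  obtain ⟨B, hB⟩ : ∃ B : Matrix (Fin n) (Fin n) ℂ,
      B = (Matrix.toEuclideanCLM (𝕜 := ℂ)).symm Cop := ⟨_, rfl⟩
  have hBC : matCLM B = Cop := by
    rw [matCLM, hB, StarAlgEquiv.apply_symm_apply]
  -- numerical range inclusion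
  have hsub : numRange B ⊆ numRange A := by
    rintro z ⟨u, hu1, rfl⟩
    obtain ⟨v, hv1, hv2⟩ := conjOp_mem_numRange T V f u
    refine ⟨v, by rw [hv1, hu1], ?_⟩
    rw [hBC, hCop, hD, hv2, hT]
  -- Crouzeix for B gives the bound
  have hcrB := h B p
  rw [matCLM_aeval, hBC] at hcrB
  have hsup : (⨆ z ∈ numRange B, ‖Polynomial.eval z p‖) ≤ S := by
    refine Real.iSup_le (fun z => ?_) hS0
    refine Real.iSup_le (fun hz => ?_) hS0
    have := hFS z (hsub hz)
    rwa [hF] at this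
  have hnormC : ‖Polynomial.aeval Cop p‖ ≤ 2 * S := le_trans hcrB (by linarith)
  -- transfer the bound to `p(T) x`
  have hkey := conjOp_norm_aeval T K V hKV hTK f p x hxK
  rw [← hD, ← hCop] at hkey
  refine le_trans hkey ?_
  have h0 : (0:ℝ) ≤ ‖x‖ := norm_nonneg _
  nlinarith
end

section
/- If every cyclic square complex matrix (of every size) satisfies the Crouzeix inequality, then every square complex matrix satisfies the Crouzeix inequality. -/
open scoped ComplexInnerProductSpace

namespace CrouzeixAux

open Polynomial Matrix

variable {n : ℕ}

/-- the lower shift matrix -/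
noncomputable def shiftM (n : ℕ) : Matrix (Fin n) (Fin n) ℂ :=
  Matrix.of fun i j => if (i : ℕ) = (j : ℕ) + 1 then 1 else 0

def e0 (n : ℕ) : Fin n → ℂ := fun i => if (i : ℕ) = 0 then 1 else 0

lemma shiftM_pow_mulVec (k : ℕ) :
    ((shiftM n) ^ k).mulVec (e0 n) = fun i : Fin n => if (i : ℕ) = k then (1:ℂ) else 0 := by
  induction k with
  | zero => ext i; simp [e0, Matrix.one_mulVec]
  | succ k ih =>
      ext i
      rw [pow_succ', ← Matrix.mulVec_mulVec, ih]
      simp only [Matrix.mulVec, dotProduct, shiftM, Matrix.of_apply]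
      by_cases hik : (i : ℕ) = k + 1
      · have hkn : k < n := by omega
        rw [Finset.sum_eq_single (⟨k, hkn⟩ : Fin n)]
        · simp [hik]
        · intro j _ hj
          have : (j : ℕ) ≠ k := fun hc => hj (Fin.ext hc)
          simp [this]
        · simp
      · rw [if_neg hik]
        apply Finset.sum_eq_zero
        intro j _
        by_cases hj : (j : ℕ) = k
        · have : (i : ℕ) ≠ (j : ℕ) + 1 := by omega
          simp [this]
        · simp [hj]

def kryl {R : Type*} [CommRing R] (M : Matrix (Fin n) (Fin n) R) (y : Fin n → R) :
    Matrix (Fin n) (Fin n) R :=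
  Matrix.of fun i k => ((M ^ (k : ℕ)).mulVec y) i

lemma kryl_mulVec {R : Type*} [CommRing R] (M : Matrix (Fin n) (Fin n) R) (y : Fin n → R)
    (w : Fin n → R) :
    (kryl M y).mulVec w = ∑ k : Fin n, w k • ((M ^ (k : ℕ)).mulVec y) := by
  ext i
  simp [kryl, Matrix.mulVec, dotProduct, Finset.sum_apply, mul_comm]

lemma kryl_map {R S : Type*} [CommRing R] [CommRing S] (f : R →+* S)
    (M : Matrix (Fin n) (Fin n) R) (y : Fin n → R) :
    kryl (M.map f) (f ∘ y) = (kryl M y).map f := by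
  ext i k
  have hpow : (M.map f) ^ (k : ℕ) = (M ^ (k : ℕ)).map f := by
    simpa [RingHom.mapMatrix_apply] using (map_pow f.mapMatrix M (k : ℕ)).symm
  simp [kryl, hpow, Matrix.mulVec, dotProduct, Matrix.map_apply, map_sum, _root_.map_mul,
    Function.comp]
lemma matCyclic_of_det_ne_zero {M : Matrix (Fin n) (Fin n) ℂ} {y : Fin n → ℂ}
    (h : (kryl M y).det ≠ 0) : MatCyclic M := by
  refine ⟨y, eq_top_iff.mpr ?_⟩
  intro v _
  have hK : kryl M y * (kryl M y)⁻¹ = 1 :=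
    Matrix.mul_nonsing_inv _ (isUnit_iff_ne_zero.mpr h)
  have hv : v = (kryl M y).mulVec ((kryl M y)⁻¹.mulVec v) := by
    rw [Matrix.mulVec_mulVec, hK, Matrix.one_mulVec]
  rw [hv, kryl_mulVec]
  exact Submodule.sum_mem _ fun k _ =>
    Submodule.smul_mem _ _ (Submodule.subset_span ⟨(k : ℕ), rfl⟩)

lemma kryl_shiftM : kryl (shiftM n) (e0 n) = 1 := by
  ext i k
  rw [Matrix.one_apply]
  have := congrFun (shiftM_pow_mulVec (n := n) (k : ℕ)) i
  simp only [kryl, Matrix.of_apply, this]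
  simp [Fin.ext_iff, eq_comm]

lemma exists_cyclic_near (A : Matrix (Fin n) (Fin n) ℂ) {θ : ℝ} (hθ : 0 < θ) :
    ∃ t : ℂ, ‖t‖ < θ ∧ MatCyclic (A + t • (shiftM n - A)) := by
  set E := shiftM n - A with hE
  set q : Polynomial ℂ :=
    (kryl (A.map Polynomial.C + (X : ℂ[X]) • E.map Polynomial.C)
      (fun i => Polynomial.C (e0 n i))).det with hq
  have hq_eval : ∀ t : ℂ, q.eval t = (kryl (A + t • E) (e0 n)).det := by
    intro t
    have h1 : (A.map Polynomial.C + (X : ℂ[X]) • E.map Polynomial.C).map (eval t) = A + t • E := by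
      ext i j
      simp [Matrix.map_apply, Matrix.add_apply, Matrix.smul_apply, smul_eq_mul]
      ring
    have h2 : (Polynomial.evalRingHom t) ∘ (fun i => Polynomial.C (e0 n i)) = e0 n := by
      ext i; simp
    calc q.eval t = (Polynomial.evalRingHom t) q := rfl
      _ = ((kryl (A.map Polynomial.C + (X : ℂ[X]) • E.map Polynomial.C)
            (fun i => Polynomial.C (e0 n i))).map (Polynomial.evalRingHom t)).det :=
        (RingHom.map_det _ _)
      _ = (kryl ((A.map Polynomial.C + (X : ℂ[X]) • E.map Polynomial.C).map
            (Polynomial.evalRingHom t))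
            ((Polynomial.evalRingHom t) ∘ (fun i => Polynomial.C (e0 n i)))).det := by
        rw [kryl_map]
      _ = (kryl (A + t • E) (e0 n)).det := by
        rw [h2]
        congr 1
        · exact congrArg₂ kryl h1 rfl
  have hq1 : q.eval 1 = 1 := by
    rw [hq_eval 1]
    have : A + (1 : ℂ) • E = shiftM n := by rw [hE]; simp
    rw [this, kryl_shiftM, Matrix.det_one]
  have hq0 : q ≠ 0 := by
    intro hc; rw [hc] at hq1; simp at hq1
  have hroots : Set.Finite {x : ℂ | q.IsRoot x} := Polynomial.finite_setOf_isRoot hq0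
  set g : ℕ → ℂ := fun m => ((θ / (m + 2) : ℝ) : ℂ) with hg
  have hginj : Function.Injective g := by
    intro a b hab
    rw [hg] at hab
    replace hab : (((θ / ((a:ℕ) + 2) : ℝ)) : ℂ) = (((θ / ((b:ℕ) + 2) : ℝ)) : ℂ) := hab
    have h2 : (θ / ((a:ℝ) + 2)) = θ / ((b:ℝ) + 2) := by exact_mod_cast hab
    have ha : ((a:ℝ) + 2) ≠ 0 := by positivity
    have hb : ((b:ℝ) + 2) ≠ 0 := by positivity
    rw [div_eq_div_iff ha hb] at h2
    have h3 : ((b:ℝ) + 2) = ((a:ℝ) + 2) := mul_left_cancel₀ hθ.ne' h2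
    have : (a:ℝ) = b := by linarith
    exact_mod_cast this
  obtain ⟨t, htg, htr⟩ := ((Set.infinite_range_of_injective hginj).diff hroots).nonempty
  obtain ⟨m, rfl⟩ := htg
  refine ⟨g m, ?_, ?_⟩
  · rw [hg]
    simp only [Complex.norm_real, Real.norm_eq_abs]
    rw [abs_of_pos (by positivity)]
    rw [div_lt_iff₀ (by positivity)]
    have hm : (0:ℝ) ≤ (m:ℝ) := Nat.cast_nonneg m
    nlinarith
  · apply matCyclic_of_det_ne_zero (y := e0 n)
    rw [← hq_eval]
    exact htr

noncomputable def matCLMlin (n : ℕ) :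
    Matrix (Fin n) (Fin n) ℂ →ₗ[ℂ]
      (EuclideanSpace ℂ (Fin n) →L[ℂ] EuclideanSpace ℂ (Fin n)) where
  toFun := matCLM
  map_add' a b := map_add (Matrix.toEuclideanCLM (𝕜 := ℂ)) a b
  map_smul' c a := map_smul (Matrix.toEuclideanCLM (𝕜 := ℂ)) c a

lemma matCLM_add_s12 (a b : Matrix (Fin n) (Fin n) ℂ) : matCLM (a + b) = matCLM a + matCLM b :=
  map_add (Matrix.toEuclideanCLM (𝕜 := ℂ)) a b

lemma matCLM_smul_s12 (c : ℂ) (a : Matrix (Fin n) (Fin n) ℂ) : matCLM (c • a) = c • matCLM a :=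
  map_smul (Matrix.toEuclideanCLM (𝕜 := ℂ)) c a

lemma cont_matCLM : Continuous (matCLM : Matrix (Fin n) (Fin n) ℂ → _) :=
  (matCLMlin n).continuous_of_finiteDimensional

lemma abs_inner_le (M : Matrix (Fin n) (Fin n) ℂ) {x : EuclideanSpace ℂ (Fin n)}
    (hx : ‖x‖ = 1) : ‖⟪x, matCLM M x⟫‖ ≤ ‖matCLM M‖ := by
  calc ‖⟪x, matCLM M x⟫‖ = ‖(⟪x, matCLM M x⟫ : ℂ)‖ := rfl
    _ ≤ ‖x‖ * ‖matCLM M x‖ := norm_inner_le_norm _ _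
    _ ≤ ‖x‖ * (‖matCLM M‖ * ‖x‖) := by gcongr; exact (matCLM M).le_opNorm x
    _ = ‖matCLM M‖ := by rw [hx]; ring
end CrouzeixAux

set_option maxHeartbeats 2000000 in
/-- If every cyclic square complex matrix satisfies the Crouzeix inequality, then every
square complex matrix satisfies the Crouzeix inequality. -/
theorem crouzeix_of_cyclic
    (h : ∀ (n : ℕ) (B : Matrix (Fin n) (Fin n) ℂ), MatCyclic B → CrouzeixIneq B) :
    ∀ (n : ℕ) (A : Matrix (Fin n) (Fin n) ℂ), CrouzeixIneq A := by
  intro n A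
  rcases Nat.eq_zero_or_pos n with hn | hn
  · subst hn
    exact h 0 A ⟨0, Subsingleton.elim _ _⟩
  intro p
  classical
  set f : ℂ → ℝ := fun z => ‖Polynomial.eval z p‖ with hf
  have hf_cont : Continuous f := by
    have h1 : Continuous fun z : ℂ => Polynomial.eval z p := by
      simpa [Polynomial.coe_aeval_eq_eval] using p.continuous_aeval (A := ℂ)
    exact continuous_norm.comp h1
  have hf0 : ∀ z, 0 ≤ f z := fun z => norm_nonneg _
  set R : ℝ := ‖matCLM A‖ with hR
  set K : Set ℂ := Metric.closedBall 0 (R + 1) with hK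
  have hRnn : 0 ≤ R := norm_nonneg _
  have hWA : ∀ w ∈ numRange A, ‖w‖ ≤ R := by
    rintro w ⟨x, hx, rfl⟩
    exact CrouzeixAux.abs_inner_le A hx
  obtain ⟨zM, hzM, hzMax⟩ :=
    (isCompact_closedBall (0:ℂ) (R+1)).exists_isMaxOn
      ⟨0, Metric.mem_closedBall_self (by linarith)⟩ hf_cont.continuousOn
  rw [isMaxOn_iff] at hzMax
  have hmemK : ∀ w : ℂ, ‖w‖ ≤ R + 1 → w ∈ K := by
    intro w hw
    simpa [hK, Metric.mem_closedBall, Complex.dist_eq] using hw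
  have hbdd : BddAbove (Set.range fun z => ⨆ _ : z ∈ numRange A, f z) := by
    refine ⟨max (f zM) 0, ?_⟩
    rintro _ ⟨z, rfl⟩
    refine Real.iSup_le (fun hz => ?_) (le_max_right _ _)
    exact le_max_of_le_left (hzMax z (hmemK z (by linarith [hWA z hz])))
  set S : ℝ := ⨆ z ∈ numRange A, f z with hS
  have hle_S : ∀ w ∈ numRange A, f w ≤ S := by
    intro w hw
    have h2 := le_ciSup hbdd w
    rwa [ciSup_pos hw] at h2
  have hS0 : 0 ≤ S := by
    have hx1 : ‖(EuclideanSpace.single (⟨0, hn⟩ : Fin n) (1:ℂ) :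
        EuclideanSpace ℂ (Fin n))‖ = 1 := by
      simp [EuclideanSpace.norm_single]
    exact le_trans (hf0 _) (hle_S _ ⟨_, hx1, rfl⟩)
  have key : ∀ δ : ℝ, 0 < δ → ‖matCLM (Polynomial.aeval A p)‖ ≤ 2 * S + 3 * δ := by
    intro δ hδ
    obtain ⟨ε, hε, hunif⟩ := (Metric.uniformContinuousOn_iff).mp
      ((isCompact_closedBall (0:ℂ) (R+1)).uniformContinuousOn_of_continuous
        hf_cont.continuousOn) δ hδ
    set E : Matrix (Fin n) (Fin n) ℂ := CrouzeixAux.shiftM n - A with hE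
    have hΦ : Continuous fun t : ℂ => matCLM (Polynomial.aeval (A + t • E) p) := by
      apply CrouzeixAux.cont_matCLM.comp
      exact (p.continuous_aeval (A := Matrix (Fin n) (Fin n) ℂ)).comp
        (continuous_const.add (continuous_id.smul continuous_const))
    obtain ⟨η, hη, hΦη⟩ := Metric.continuousAt_iff.mp (hΦ.continuousAt (x := (0:ℂ))) δ hδ
    set ε' : ℝ := min ε 1 with hε'
    have hε'pos : 0 < ε' := lt_min hε one_pos
    have hε'le1 : ε' ≤ 1 := min_le_right ε 1
    have hEnn : (0:ℝ) ≤ ‖matCLM E‖ := norm_nonneg _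
    set θ : ℝ := min η (ε' / (‖matCLM E‖ + 1)) with hθdef
    have hθpos : 0 < θ := lt_min hη (by positivity)
    obtain ⟨t, ht, hcyc⟩ := CrouzeixAux.exists_cyclic_near A hθpos
    set B : Matrix (Fin n) (Fin n) ℂ := A + t • E with hB
    have hBA : matCLM B = matCLM A + matCLM (t • E) := CrouzeixAux.matCLM_add_s12 A (t • E)
    have hdiff : ∀ x : EuclideanSpace ℂ (Fin n), ‖x‖ = 1 →
        ‖⟪x, matCLM B x⟫ - ⟪x, matCLM A x⟫‖ < ε' := by
      intro x hx
      have h1 : (⟪x, matCLM B x⟫ - ⟪x, matCLM A x⟫ : ℂ) = ⟪x, matCLM (t • E) x⟫ := by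
        rw [hBA]
        simp [inner_add_right]
      rw [h1]
      have h2 : ‖⟪x, matCLM (t • E) x⟫‖ ≤ ‖matCLM (t • E)‖ :=
        CrouzeixAux.abs_inner_le _ hx
      have h3 : ‖matCLM (t • E)‖ = ‖t‖ * ‖matCLM E‖ := by
        rw [CrouzeixAux.matCLM_smul_s12]
        exact norm_smul t (matCLM E)
      have hθ2 : θ ≤ ε' / (‖matCLM E‖ + 1) := min_le_right _ _
      have h5 : θ * (‖matCLM E‖ + 1) ≤ ε' := by
        have hc : (0:ℝ) < ‖matCLM E‖ + 1 := by positivity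
        calc θ * (‖matCLM E‖ + 1) ≤ (ε' / (‖matCLM E‖ + 1)) * (‖matCLM E‖ + 1) := by
              exact mul_le_mul_of_nonneg_right hθ2 hc.le
          _ = ε' := div_mul_cancel₀ _ hc.ne'
      have h4 : ‖t‖ * ‖matCLM E‖ < ε' := by
        have h6 : ‖t‖ * (‖matCLM E‖ + 1) < θ * (‖matCLM E‖ + 1) := by
          apply mul_lt_mul_of_pos_right ht (by positivity)
        nlinarith [norm_nonneg t]
      calc ‖⟪x, matCLM (t • E) x⟫‖ ≤ ‖matCLM (t • E)‖ := h2
        _ = ‖t‖ * ‖matCLM E‖ := h3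
        _ < ε' := h4
    have hnrB : ∀ z ∈ numRange B, f z ≤ S + δ := by
      rintro z ⟨x, hx, rfl⟩
      set w : ℂ := ⟪x, matCLM A x⟫ with hw
      have hwmem : w ∈ numRange A := ⟨x, hx, rfl⟩
      have hd := hdiff x hx
      have hwK : w ∈ K := hmemK w (by linarith [hWA w hwmem])
      have htr : ‖⟪x, matCLM B x⟫‖ ≤
          ‖w‖ + ‖⟪x, matCLM B x⟫ - w‖ := by
        have := norm_add_le w (⟪x, matCLM B x⟫ - w)
        simpa using this
      have hzK : (⟪x, matCLM B x⟫ : ℂ) ∈ K := by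
        apply hmemK
        have := hWA w hwmem
        linarith
      have hdist : dist (⟪x, matCLM B x⟫ : ℂ) w < ε := by
        rw [Complex.dist_eq]
        exact lt_of_lt_of_le hd (min_le_left ε 1)
      have h7 := hunif _ hzK _ hwK hdist
      rw [Real.dist_eq] at h7
      have h8 := abs_sub_lt_iff.mp h7
      have := hle_S w hwmem
      simp only [hf] at *
      linarith [h8.1]
    have hsupB : (⨆ z ∈ numRange B, f z) ≤ S + δ :=
      Real.iSup_le (fun z => Real.iSup_le (fun hz => hnrB z hz) (by linarith)) (by linarith)
    have hCB := h n B hcyc p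
    have hnormB : ‖matCLM (Polynomial.aeval B p)‖ ≤ 2 * (S + δ) := by
      refine le_trans hCB ?_
      have : (⨆ z ∈ numRange B, ‖Polynomial.eval z p‖) ≤ S + δ := hsupB
      linarith
    have h0E : A + (0:ℂ) • E = A := by simp
    have hΦt : dist (matCLM (Polynomial.aeval B p)) (matCLM (Polynomial.aeval A p)) < δ := by
      have h9 : dist t 0 < η := by
        rw [dist_zero_right]
        exact lt_of_lt_of_le ht (min_le_left _ _)
      have := hΦη h9
      rw [h0E] at this
      exact this
    have htri : ‖matCLM (Polynomial.aeval A p)‖ ≤ ‖matCLM (Polynomial.aeval B p)‖ +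
        dist (matCLM (Polynomial.aeval B p)) (matCLM (Polynomial.aeval A p)) := by
      rw [dist_eq_norm]
      have := norm_add_le (matCLM (Polynomial.aeval B p))
        (matCLM (Polynomial.aeval A p) - matCLM (Polynomial.aeval B p))
      simp only [add_sub_cancel] at this
      calc ‖matCLM (Polynomial.aeval A p)‖ ≤
          ‖matCLM (Polynomial.aeval B p)‖ + ‖matCLM (Polynomial.aeval A p) -
            matCLM (Polynomial.aeval B p)‖ := this
        _ = _ := by rw [norm_sub_rev]
    linarith
  show ‖matCLM (Polynomial.aeval A p)‖ ≤ 2 * S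
  by_contra hcon
  push_neg at hcon
  have hδ : 0 < (‖matCLM (Polynomial.aeval A p)‖ - 2 * S) / 4 := by linarith
  have := key _ hδ
  linarith
end
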